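/- arXiv:1907.01437 — 5 statements merged into one kernel-verified Lean document; each statement's English description precedes it below -/
import Mathlib

section
/- Let γ > β > 0 and let h lie in H_γ with weak derivative g and with h(∞) := lim_{x→∞} h(x) = 0. Then ∫₀^∞ |h(x)|² e^{βx} dx ≤ (1/(γ(γ−β))) · ∫₀^∞ |g(t)|² e^{γt} dt; in particular h belongs to the weighted Lebesgue space L²([0,∞), e^{βx} dx) and ‖h‖_{L²_β} ≤ (1/√(γ(γ−β))) ‖h‖_γ. -/
open MeasureTheory Real Filter Set

lemma exp_neg_mul_integral (b a : ℝ) (hb : 0 < b) :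
    ∫ t in Set.Ioi a, Real.exp (-(b * t)) = Real.exp (-(b * a)) / b := by
  have hderiv : ∀ x ∈ Set.Ici a,
      HasDerivAt (fun t => -(Real.exp (-(b * t)) / b)) (Real.exp (-(b * x))) x := by
    intro x _
    have h1 : HasDerivAt (fun t : ℝ => -(b * t)) (-b) x := by
      simpa [Pi.neg_def] using ((hasDerivAt_id x).const_mul b).neg
    have h2 := (h1.exp.div_const b).neg
    exact h2.congr_deriv (by field_simp)
  have hint : IntegrableOn (fun x => Real.exp (-(b * x))) (Set.Ioi a) := by
    simpa [neg_mul] using exp_neg_integrableOn_Ioi a hb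
  have htend : Tendsto (fun t => -(Real.exp (-(b * t)) / b)) atTop (nhds 0) := by
    have h1 : Tendsto (fun t : ℝ => -(b * t)) atTop atBot :=
      tendsto_neg_atTop_atBot.comp (tendsto_id.const_mul_atTop hb)
    have := (Real.tendsto_exp_atBot.comp h1).div_const b
    simpa using this.neg
  have := integral_Ioi_of_hasDerivAt_of_tendsto' hderiv hint htend
  rw [this]; ring


/-- If `γ > β > 0` and `h` lies in `H_γ` with weak derivative `g` and `h(∞) = 0`, then
`∫₀^∞ |h(x)|² e^{βx} dx ≤ (1/(γ(γ-β))) ∫₀^∞ |g(t)|² e^{γt} dt`; in particular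
`h ∈ L²([0,∞), e^{βx}dx)` with `‖h‖_{L²_β} ≤ (1/√(γ(γ-β))) ‖h‖_γ`. -/
theorem embedding_Hgamma_L2beta
    (β γ : ℝ) (hβ : 0 < β) (hβγ : β < γ) (h g : ℝ → ℝ)
    (hg_meas : Measurable g)
    (hg_int : IntegrableOn (fun t => g t ^ 2 * Real.exp (γ * t)) (Set.Ioi 0))
    (hFTC : ∀ x ≥ (0 : ℝ), h x = h 0 + ∫ t in (0:ℝ)..x, g t)
    (hlim : Tendsto h atTop (nhds 0)) :
    IntegrableOn (fun x => h x ^ 2 * Real.exp (β * x)) (Set.Ioi 0) ∧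
      (∫ x in Set.Ioi (0:ℝ), h x ^ 2 * Real.exp (β * x))
        ≤ (1 / (γ * (γ - β))) * ∫ t in Set.Ioi (0:ℝ), g t ^ 2 * Real.exp (γ * t) ∧
      Real.sqrt (∫ x in Set.Ioi (0:ℝ), h x ^ 2 * Real.exp (β * x))
        ≤ (1 / Real.sqrt (γ * (γ - β))) *
            Real.sqrt (|h 0| ^ 2 + ∫ t in Set.Ioi (0:ℝ), g t ^ 2 * Real.exp (γ * t)) := by
  have hγ : 0 < γ := hβ.trans hβγ
  set C := ∫ t in Set.Ioi (0:ℝ), g t ^ 2 * Real.exp (γ * t) with hC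
  have hC0 : 0 ≤ C := setIntegral_nonneg measurableSet_Ioi (fun t _ => by positivity)
  -- integrability of g on Ioi x for x ≥ 0
  have hg_int' : ∀ x : ℝ, 0 ≤ x → IntegrableOn g (Set.Ioi x) := by
    intro x hx
    have hsub : Set.Ioi x ⊆ Set.Ioi 0 := Ioi_subset_Ioi hx
    have h1 : IntegrableOn (fun t => g t ^ 2 * Real.exp (γ * t)) (Set.Ioi x) :=
      hg_int.mono_set hsub
    have h2 : IntegrableOn (fun t => Real.exp (-(γ * t))) (Set.Ioi x) := by
      simpa [neg_mul] using exp_neg_integrableOn_Ioi x hγ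
    have hb : IntegrableOn
        (fun t => (g t ^ 2 * Real.exp (γ * t) + Real.exp (-(γ * t))) / 2) (Set.Ioi x) :=
      (h1.add h2).div_const 2
    refine hb.mono' (hg_meas.aestronglyMeasurable.restrict) ?_
    refine ae_of_all _ fun t => ?_
    rw [Real.norm_eq_abs]
    have hEF : Real.exp (γ * t / 2) * Real.exp (-(γ * t / 2)) = 1 := by
      rw [← Real.exp_add]; simp
    have e1 : Real.exp (γ * t) = Real.exp (γ * t / 2) ^ 2 := by
      rw [sq, ← Real.exp_add]; ring_nf
    have e2 : Real.exp (-(γ * t)) = Real.exp (-(γ * t / 2)) ^ 2 := by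
      rw [sq, ← Real.exp_add]; ring_nf
    nlinarith [sq_nonneg (|g t| * Real.exp (γ * t / 2) - Real.exp (-(γ * t / 2))),
      Real.exp_pos (γ * t / 2), Real.exp_pos (-(γ * t / 2)), abs_nonneg (g t),
      sq_abs (g t)]
  -- representation h x = - ∫_{Ioi x} g
  have hrep : ∀ x : ℝ, 0 ≤ x → h x = - ∫ t in Set.Ioi x, g t := by
    intro x hx
    have htend : Tendsto (fun y => h x + ∫ t in x..y, g t) atTop
        (nhds (h x + ∫ t in Set.Ioi x, g t)) :=
      tendsto_const_nhds.add (intervalIntegral_tendsto_integral_Ioi x (hg_int' x hx) tendsto_id)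
    have heq : (fun y => h x + ∫ t in x..y, g t) =ᶠ[atTop] h := by
      filter_upwards [eventually_ge_atTop x] with y hy
      have hy0 : (0:ℝ) ≤ y := hx.trans hy
      have hxI : IntervalIntegrable g volume 0 x := by
        rw [intervalIntegrable_iff_integrableOn_Ioc_of_le hx]
        exact (hg_int' 0 le_rfl).mono_set Ioc_subset_Ioi_self
      have hyI : IntervalIntegrable g volume x y := by
        rw [intervalIntegrable_iff_integrableOn_Ioc_of_le hy]
        exact ((hg_int' 0 le_rfl).mono_set (Ioc_subset_Ioi_self.trans (Ioi_subset_Ioi hx)))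
      rw [hFTC y hy0, hFTC x hx]
      have := intervalIntegral.integral_add_adjacent_intervals hxI hyI
      rw [← this]; ring
    have := htend.congr' heq
    have hu := tendsto_nhds_unique this hlim
    linarith [hu]
  -- pointwise bound
  have hpt : ∀ x : ℝ, 0 ≤ x → h x ^ 2 ≤ C / γ * Real.exp (-(γ * x)) := by
    intro x hx
    set μ := volume.restrict (Set.Ioi x) with hμ
    set f : ℝ → ℝ := fun t => |g t| * Real.exp (γ * t / 2) with hf
    set b : ℝ → ℝ := fun t => Real.exp (-(γ * t / 2)) with hb
    have hfmeas : Measurable f := (hg_meas.abs.mul (by fun_prop))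
    have hbmeas : Measurable b := by fun_prop
    have hf2 : ∀ t : ℝ, f t ^ (2:ℝ) = g t ^ 2 * Real.exp (γ * t) := by
      intro t
      rw [Real.rpow_two, hf]
      have : Real.exp (γ * t / 2) ^ 2 = Real.exp (γ * t) := by
        rw [sq, ← Real.exp_add]; ring_nf
      rw [mul_pow, sq_abs, this]
    have hb2 : ∀ t : ℝ, b t ^ (2:ℝ) = Real.exp (-(γ * t)) := by
      intro t
      rw [Real.rpow_two, hb]
      rw [sq, ← Real.exp_add]; ring_nf
    have hfb : ∀ t : ℝ, f t * b t = |g t| := by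
      intro t
      rw [hf, hb, mul_assoc, ← Real.exp_add]
      simp
    have hfint : IntegrableOn (fun t => f t ^ (2:ℝ)) (Set.Ioi x) := by
      refine (hg_int.mono_set (Ioi_subset_Ioi hx)).congr_fun (fun t _ => (hf2 t).symm)
        measurableSet_Ioi
    have hbint : IntegrableOn (fun t => b t ^ (2:ℝ)) (Set.Ioi x) := by
      refine IntegrableOn.congr_fun ?_ (fun t _ => (hb2 t).symm) measurableSet_Ioi
      simpa [neg_mul] using exp_neg_integrableOn_Ioi x hγ
    have hfL : MemLp f (ENNReal.ofReal 2) μ := by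
      rw [(by norm_num : ENNReal.ofReal 2 = 2)]
      refine (memLp_two_iff_integrable_sq hfmeas.aestronglyMeasurable.restrict).mpr ?_
      exact hfint.congr_fun (fun t _ => by simp only [Real.rpow_two]) measurableSet_Ioi
    have hbL : MemLp b (ENNReal.ofReal 2) μ := by
      rw [(by norm_num : ENNReal.ofReal 2 = 2)]
      refine (memLp_two_iff_integrable_sq hbmeas.aestronglyMeasurable.restrict).mpr ?_
      exact hbint.congr_fun (fun t _ => by simp only [Real.rpow_two]) measurableSet_Ioi
    have hCS := integral_mul_le_Lp_mul_Lq_of_nonneg (μ := μ)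
      Real.HolderConjugate.two_two
      (ae_of_all _ fun t => by positivity) (ae_of_all _ fun t => by positivity) hfL hbL
    have hint_f2 : ∫ t in Set.Ioi x, f t ^ (2:ℝ) ≤ C := by
      rw [hC]
      calc ∫ t in Set.Ioi x, f t ^ (2:ℝ)
          = ∫ t in Set.Ioi x, g t ^ 2 * Real.exp (γ * t) :=
            setIntegral_congr_fun measurableSet_Ioi (fun t _ => hf2 t)
        _ ≤ ∫ t in Set.Ioi 0, g t ^ 2 * Real.exp (γ * t) := by
            refine setIntegral_mono_set hg_int (ae_of_all _ fun t => by positivity) ?_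
            exact HasSubset.Subset.eventuallyLE (Ioi_subset_Ioi hx)
    have hint_b2 : ∫ t in Set.Ioi x, b t ^ (2:ℝ) = Real.exp (-(γ * x)) / γ := by
      calc ∫ t in Set.Ioi x, b t ^ (2:ℝ)
          = ∫ t in Set.Ioi x, Real.exp (-(γ * t)) :=
            setIntegral_congr_fun measurableSet_Ioi (fun t _ => hb2 t)
        _ = Real.exp (-(γ * x)) / γ := exp_neg_mul_integral γ x hγ
    have habs : |h x| ≤ ∫ t in Set.Ioi x, |g t| := by
      rw [hrep x hx, abs_neg]
      exact (norm_integral_le_integral_norm g).trans_eq (by simp [Real.norm_eq_abs])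
    have hstep : (∫ t in Set.Ioi x, |g t|) ≤
        C ^ ((1:ℝ)/2) * (Real.exp (-(γ * x)) / γ) ^ ((1:ℝ)/2) := by
      calc (∫ t in Set.Ioi x, |g t|) = ∫ t, f t * b t ∂μ := by
            rw [hμ]
            exact (setIntegral_congr_fun measurableSet_Ioi (fun t _ => (hfb t).symm))
        _ ≤ (∫ t, f t ^ (2:ℝ) ∂μ) ^ ((1:ℝ)/2) * (∫ t, b t ^ (2:ℝ) ∂μ) ^ ((1:ℝ)/2) := hCS
        _ ≤ C ^ ((1:ℝ)/2) * (Real.exp (-(γ * x)) / γ) ^ ((1:ℝ)/2) := by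
            rw [hμ, hint_b2]
            refine mul_le_mul_of_nonneg_right
              (Real.rpow_le_rpow (integral_nonneg fun t => by positivity) hint_f2 (by norm_num))
              (Real.rpow_nonneg (by positivity) _)
    have hBnn : (0:ℝ) ≤ C ^ ((1:ℝ)/2) * (Real.exp (-(γ * x)) / γ) ^ ((1:ℝ)/2) := by
      have : (0:ℝ) ≤ Real.exp (-(γ * x)) / γ := by positivity
      positivity
    have habs2 : |h x| ≤ C ^ ((1:ℝ)/2) * (Real.exp (-(γ * x)) / γ) ^ ((1:ℝ)/2) :=
      habs.trans hstep
    have := pow_le_pow_left₀ (abs_nonneg (h x)) habs2 2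
    rw [sq_abs] at this
    refine this.trans_eq ?_
    have hd : (0:ℝ) ≤ Real.exp (-(γ * x)) / γ := by positivity
    have h1 : (C ^ ((1:ℝ)/2)) ^ 2 = C := by
      rw [← Real.rpow_natCast (C ^ ((1:ℝ)/2)) 2, ← Real.rpow_mul hC0]
      try norm_num
    have h2 : ((Real.exp (-(γ * x)) / γ) ^ ((1:ℝ)/2)) ^ 2 = Real.exp (-(γ * x)) / γ := by
      rw [← Real.rpow_natCast ((Real.exp (-(γ * x)) / γ) ^ ((1:ℝ)/2)) 2, ← Real.rpow_mul hd]
      try norm_num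
    rw [mul_pow, h1, h2]
    ring
  have hγβ : 0 < γ - β := sub_pos.mpr hβγ
  -- auxiliary continuous version of h on [0,∞)
  set g' : ℝ → ℝ := (Set.Ioi (0:ℝ)).indicator g with hg'
  have hg'int : Integrable g' := (hg_int' 0 le_rfl).integrable_indicator measurableSet_Ioi
  have hHcont : Continuous (fun x => h 0 + ∫ t in (0:ℝ)..x, g' t) :=
    continuous_const.add (intervalIntegral.continuous_primitive
      (fun a b => hg'int.intervalIntegrable) 0)
  have hHeq : ∀ x ∈ Set.Ioi (0:ℝ), h x = h 0 + ∫ t in (0:ℝ)..x, g' t := by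
    intro x hx
    rw [hFTC x (le_of_lt hx)]
    congr 1
    rw [intervalIntegral.integral_of_le (le_of_lt hx),
      intervalIntegral.integral_of_le (le_of_lt hx)]
    refine setIntegral_congr_fun measurableSet_Ioc (fun t ht => ?_)
    exact (Set.indicator_of_mem ht.1 g).symm
  have hmeas : AEStronglyMeasurable (fun x => h x ^ 2 * Real.exp (β * x))
      (volume.restrict (Set.Ioi 0)) := by
    have h1 : AEStronglyMeasurable h (volume.restrict (Set.Ioi 0)) := by
      refine (hHcont.aestronglyMeasurable.restrict).congr ?_
      filter_upwards [ae_restrict_mem measurableSet_Ioi] with x hx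
      exact (hHeq x hx).symm
    have h2 : AEStronglyMeasurable (fun x => Real.exp (β * x))
        (volume.restrict (Set.Ioi 0)) := (Continuous.aestronglyMeasurable (by fun_prop))
    exact AEStronglyMeasurable.congr ((h1.mul h1).mul h2) (ae_of_all _ fun x => by simp [Pi.mul_apply, pow_two, mul_assoc])
  have hdom : IntegrableOn (fun x => C / γ * Real.exp (-((γ - β) * x))) (Set.Ioi 0) := by
    have h0 : IntegrableOn (fun x => C / γ * Real.exp (-(γ - β) * x)) (Set.Ioi 0) :=
      (exp_neg_integrableOn_Ioi 0 hγβ).const_mul (C / γ)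
    exact h0.congr_fun (fun x _ => by simp only [neg_mul]) measurableSet_Ioi
  have hbound : ∀ x : ℝ, 0 ≤ x →
      h x ^ 2 * Real.exp (β * x) ≤ C / γ * Real.exp (-((γ - β) * x)) := by
    intro x hx
    calc h x ^ 2 * Real.exp (β * x)
        ≤ C / γ * Real.exp (-(γ * x)) * Real.exp (β * x) :=
          mul_le_mul_of_nonneg_right (hpt x hx) (Real.exp_pos _).le
      _ = C / γ * Real.exp (-((γ - β) * x)) := by
          rw [mul_assoc, ← Real.exp_add]; ring_nf
  have hInt : IntegrableOn (fun x => h x ^ 2 * Real.exp (β * x)) (Set.Ioi 0) := by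
    refine hdom.mono' hmeas ?_
    filter_upwards [ae_restrict_mem measurableSet_Ioi] with x hx
    rw [Real.norm_eq_abs, abs_of_nonneg (by positivity)]
    exact hbound x (le_of_lt hx)
  have hIval : ∫ x in Set.Ioi (0:ℝ), C / γ * Real.exp (-((γ - β) * x))
      = 1 / (γ * (γ - β)) * C := by
    rw [integral_const_mul, exp_neg_mul_integral (γ - β) 0 hγβ]
    simp only [mul_zero, neg_zero, Real.exp_zero]
    field_simp
    try ring
  have hIle : (∫ x in Set.Ioi (0:ℝ), h x ^ 2 * Real.exp (β * x))
      ≤ 1 / (γ * (γ - β)) * C := by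
    rw [← hIval]
    exact setIntegral_mono_on hInt hdom measurableSet_Ioi (fun x hx => hbound x (le_of_lt hx))
  refine ⟨hInt, hIle, ?_⟩
  have hfac : (0:ℝ) ≤ 1 / (γ * (γ - β)) :=
    div_nonneg one_pos.le (mul_nonneg hγ.le hγβ.le)
  have h2 : (∫ x in Set.Ioi (0:ℝ), h x ^ 2 * Real.exp (β * x))
      ≤ 1 / (γ * (γ - β)) * (|h 0| ^ 2 + C) := by
    refine hIle.trans ?_
    have : (0:ℝ) ≤ |h 0| ^ 2 := by positivity
    nlinarith
  calc Real.sqrt (∫ x in Set.Ioi (0:ℝ), h x ^ 2 * Real.exp (β * x))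
      ≤ Real.sqrt (1 / (γ * (γ - β)) * (|h 0| ^ 2 + C)) := Real.sqrt_le_sqrt h2
    _ = 1 / Real.sqrt (γ * (γ - β)) * Real.sqrt (|h 0| ^ 2 + C) := by
        rw [Real.sqrt_mul hfac, one_div, Real.sqrt_inv, ← one_div]
end

section
/- Let γ > β > 0 and let h lie in H_γ with weak derivative g and with h(∞) := lim_{x→∞} h(x) = 0. Then the function x ↦ h(x) e^{(β/2)x} on [0,∞) satisfies h(x)e^{(β/2)x} = h(0) + ∫₀ˣ (g(t) + (β/2) h(t)) e^{(β/2)t} dt for all x ≥ 0, and one has the estimates ∫₀^∞ |h(x) e^{(β/2)x}|² dx ≤ (1/(γ(γ−β))) ‖h‖_γ² and ∫₀^∞ |(g(x) + (β/2) h(x)) e^{(β/2)x}|² dx ≤ (2 + β²/(2γ(γ−β))) ‖h‖_γ². In particular x ↦ h(x)e^{(β/2)x} belongs to the Sobolev space W¹((0,∞)), with W¹-norm at most C‖h‖_γ where C² = 2 + (1 + β²/2)/(γ(γ−β)). -/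
open MeasureTheory Real Filter Set

lemma myExpDeriv (b : ℝ) (hb : b ≠ 0) (x : ℝ) :
    HasDerivAt (fun t : ℝ => Real.exp (b * t) / b) (Real.exp (b * x)) x := by
  have := (((hasDerivAt_id x).const_mul b).exp).div_const b
  simpa [mul_comm, mul_div_assoc, mul_div_cancel_left₀ _ hb] using this

lemma myIntegral_exp_neg_mul_Ioi (a : ℝ) {b : ℝ} (hb : 0 < b) :
    ∫ x in Ioi a, Real.exp (-b * x) = Real.exp (-b * a) / b := by
  refine tendsto_nhds_unique
    (intervalIntegral_tendsto_integral_Ioi a (exp_neg_integrableOn_Ioi a hb) tendsto_id) ?_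
  have key : ∀ y : ℝ, ∫ x in a..y, Real.exp (-b * x)
      = Real.exp (-b * a) / b - Real.exp (-b * y) / b := by
    intro y
    have hd : ∀ x ∈ Set.uIcc a y, HasDerivAt (fun t : ℝ => Real.exp (-b * t) / (-b))
        (Real.exp (-b * x)) x := fun x _ => myExpDeriv (-b) (neg_ne_zero.2 hb.ne') x
    rw [intervalIntegral.integral_eq_sub_of_hasDerivAt hd
      ((Real.continuous_exp.comp (continuous_const.mul continuous_id)).intervalIntegrable a y)]
    rw [div_neg, div_neg]
    ring
  simp only [key]
  have h1 : Tendsto (fun y : ℝ => Real.exp (-b * y) / b) atTop (nhds 0) := by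
    have := (Real.tendsto_exp_atBot.comp
      (tendsto_id.const_mul_atTop_of_neg (neg_neg_iff_pos.2 hb))).div_const b
    simpa using this
  simpa using (tendsto_const_nhds.sub h1)

lemma myAmgm {ε : ℝ} (a b : ℝ) (hε : 0 < ε) : 2 * (a * b) ≤ ε * a ^ 2 + b ^ 2 / ε := by
  have key : 2 * (a * b) * ε ≤ (ε * a ^ 2 + b ^ 2 / ε) * ε := by
    have hd : b ^ 2 / ε * ε = b ^ 2 := div_mul_cancel₀ _ hε.ne'
    nlinarith [sq_nonneg (ε * a - b)]
  exact le_of_mul_le_mul_right key hε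

lemma myCS {I A B : ℝ} (hI : 0 ≤ I) (hA : 0 ≤ A) (hB : 0 < B)
    (hx : ∀ ε : ℝ, 0 < ε → 2 * I ≤ ε * A + B / ε) : I ^ 2 ≤ A * B := by
  rcases eq_or_lt_of_le hA with hA0 | hA0
  · have hI0 : I = 0 := by
      by_contra hne
      have hpos : 0 < I := lt_of_le_of_ne hI (Ne.symm hne)
      have h1 := hx (B / I) (div_pos hB hpos)
      rw [← hA0] at h1
      have h2 : B / (B / I) = I := by field_simp
      rw [mul_zero, zero_add, h2] at h1
      linarith
    rw [hI0, ← hA0]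
    norm_num
  · set ε := Real.sqrt (B / A) with hεdef
    have hε : 0 < ε := Real.sqrt_pos.2 (div_pos hB hA0)
    have hε2 : ε ^ 2 = B / A := Real.sq_sqrt (div_pos hB hA0).le
    have hεA : ε ^ 2 * A = B := by rw [hε2]; field_simp
    have h1 := hx ε hε
    have h2 : 2 * I * ε ≤ ε ^ 2 * A + B := by
      have h3 := mul_le_mul_of_nonneg_right h1 hε.le
      have h4 : (ε * A + B / ε) * ε = ε ^ 2 * A + B := by
        field_simp
      linarith [h4 ▸ h3]
    have h5 : I * ε ≤ B := by linarith [hεA ▸ h2]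
    have h6 : (I * ε) ^ 2 ≤ B ^ 2 := by nlinarith [mul_nonneg hI hε.le]
    have h7 : I ^ 2 * (B / A) ≤ B ^ 2 := by
      calc I ^ 2 * (B / A) = (I * ε) ^ 2 := by rw [mul_pow, hε2]
        _ ≤ B ^ 2 := h6
    have h8 : I ^ 2 * B ≤ A * B ^ 2 := by
      have := mul_le_mul_of_nonneg_right h7 hA0.le
      calc I ^ 2 * B = I ^ 2 * (B / A) * A := by field_simp
        _ ≤ B ^ 2 * A := this
        _ = A * B ^ 2 := by ring
    nlinarith [h8, hB]

lemma myIntegral_exp_Ioc (c : ℝ) {a b : ℝ} (hab : a ≤ b) :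
    ∫ t in Ioc a b, c * Real.exp (c * t) = Real.exp (c * b) - Real.exp (c * a) := by
  rw [← intervalIntegral.integral_of_le hab]
  have hd : ∀ x ∈ uIcc a b, HasDerivAt (fun t => Real.exp (c * t)) (c * Real.exp (c * x)) x := by
    intro x _
    have := ((hasDerivAt_id x).const_mul c).exp
    simpa [mul_comm] using this
  exact intervalIntegral.integral_eq_sub_of_hasDerivAt hd
    ((continuous_const.mul (Real.continuous_exp.comp (continuous_const.mul continuous_id))).intervalIntegrable a b)

set_option maxHeartbeats 1000000 in
/-- If `γ > β > 0` and `h` lies in `H_γ` with weak derivative `g` and `h(∞) = 0`, then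
`x ↦ h(x)e^{(β/2)x}` is absolutely continuous on `[0,∞)` with weak derivative
`x ↦ (g(x) + (β/2)h(x))e^{(β/2)x}`, and it belongs to the Sobolev space `W¹((0,∞))`
with the indicated norm estimates. -/
theorem Hgamma_to_Sobolev
    (β γ : ℝ) (hβ : 0 < β) (hβγ : β < γ) (h g : ℝ → ℝ)
    (hg_meas : Measurable g)
    (hg_int : IntegrableOn (fun t => g t ^ 2 * Real.exp (γ * t)) (Set.Ioi 0))
    (hFTC : ∀ x ≥ (0 : ℝ), h x = h 0 + ∫ t in (0:ℝ)..x, g t)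
    (hlim : Tendsto h atTop (nhds 0)) :
    (∀ x ≥ (0 : ℝ), h x * Real.exp (β / 2 * x)
        = h 0 + ∫ t in (0:ℝ)..x, (g t + β / 2 * h t) * Real.exp (β / 2 * t)) ∧
      IntegrableOn (fun x => (h x * Real.exp (β / 2 * x)) ^ 2) (Set.Ioi 0) ∧
      (∫ x in Set.Ioi (0:ℝ), (h x * Real.exp (β / 2 * x)) ^ 2)
        ≤ (1 / (γ * (γ - β))) *
            (|h 0| ^ 2 + ∫ t in Set.Ioi (0:ℝ), g t ^ 2 * Real.exp (γ * t)) ∧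
      IntegrableOn (fun x => ((g x + β / 2 * h x) * Real.exp (β / 2 * x)) ^ 2) (Set.Ioi 0) ∧
      (∫ x in Set.Ioi (0:ℝ), ((g x + β / 2 * h x) * Real.exp (β / 2 * x)) ^ 2)
        ≤ (2 + β ^ 2 / (2 * γ * (γ - β))) *
            (|h 0| ^ 2 + ∫ t in Set.Ioi (0:ℝ), g t ^ 2 * Real.exp (γ * t)) ∧
      (∫ x in Set.Ioi (0:ℝ), (h x * Real.exp (β / 2 * x)) ^ 2)
          + (∫ x in Set.Ioi (0:ℝ), ((g x + β / 2 * h x) * Real.exp (β / 2 * x)) ^ 2)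
        ≤ (2 + (1 + β ^ 2 / 2) / (γ * (γ - β))) *
            (|h 0| ^ 2 + ∫ t in Set.Ioi (0:ℝ), g t ^ 2 * Real.exp (γ * t)) := by
  have hγ : 0 < γ := hβ.trans hβγ
  have hγβ : 0 < γ - β := sub_pos.2 hβγ
  set K := ∫ t in Set.Ioi (0:ℝ), g t ^ 2 * Real.exp (γ * t) with hKdef
  have hK0 : 0 ≤ K := setIntegral_nonneg measurableSet_Ioi (fun t _ => by positivity)
  -- pointwise bound on |g|
  have hptg : ∀ (ε : ℝ), 0 < ε → ∀ t : ℝ,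
      2 * |g t| ≤ ε * (g t ^ 2 * Real.exp (γ * t)) + Real.exp (-γ * t) / ε := by
    intro ε hε t
    have key := myAmgm (|g t| * Real.exp (γ * t / 2)) (Real.exp (-(γ * t) / 2)) hε
    have eab : |g t| * Real.exp (γ * t / 2) * Real.exp (-(γ * t) / 2) = |g t| := by
      rw [mul_assoc, ← Real.exp_add]
      have : γ * t / 2 + -(γ * t) / 2 = 0 := by ring
      rw [this, Real.exp_zero, mul_one]
    have ea2 : (|g t| * Real.exp (γ * t / 2)) ^ 2 = g t ^ 2 * Real.exp (γ * t) := by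
      rw [mul_pow, sq_abs]
      congr 1
      rw [pow_two, ← Real.exp_add]
      congr 1
      ring
    have eb2 : Real.exp (-(γ * t) / 2) ^ 2 = Real.exp (-γ * t) := by
      rw [pow_two, ← Real.exp_add]
      congr 1
      ring
    rw [eab, ea2, eb2] at key
    exact key
  -- g is integrable on (0,∞)
  have hg1 : IntegrableOn g (Set.Ioi 0) := by
    refine Integrable.mono' (((hg_int.add (exp_neg_integrableOn_Ioi 0 hγ))).div_const 2)
      hg_meas.aestronglyMeasurable.restrict (ae_of_all _ (fun t => ?_))
    have := hptg 1 one_pos t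
    simp only [one_mul, div_one] at this
    simp only [Pi.add_apply, Real.norm_eq_abs]
    linarith
  have hgx : ∀ x ≥ (0:ℝ), IntegrableOn g (Set.Ioi x) :=
    fun x hx => hg1.mono_set (Ioi_subset_Ioi hx)
  -- interval integrability
  have hgii : ∀ a b : ℝ, 0 ≤ a → a ≤ b → IntervalIntegrable g volume a b := by
    intro a b ha hab
    rw [intervalIntegrable_iff_integrableOn_Ioc_of_le hab]
    exact hg1.mono_set (fun t ht => lt_of_le_of_lt ha ht.1)
  -- tail formula
  have htail : ∀ x ≥ (0:ℝ), h x = -∫ t in Set.Ioi x, g t := by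
    intro x hx
    have t1 : Tendsto (fun y => h x + ∫ t in x..y, g t) atTop
        (nhds (h x + ∫ t in Set.Ioi x, g t)) :=
      tendsto_const_nhds.add (intervalIntegral_tendsto_integral_Ioi x (hgx x hx) tendsto_id)
    have t2 : Tendsto (fun y => h x + ∫ t in x..y, g t) atTop (nhds 0) := by
      refine hlim.congr' ?_
      filter_upwards [eventually_ge_atTop x] with y hy
      rw [hFTC y (hx.trans hy), hFTC x hx,
        ← intervalIntegral.integral_add_adjacent_intervals (hgii 0 x le_rfl hx) (hgii x y hx hy)]
      ring
    have := tendsto_nhds_unique t1 t2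
    linarith
  -- pointwise bound on h
  have hpb : ∀ x ≥ (0:ℝ), h x ^ 2 ≤ K * (Real.exp (-γ * x) / γ) := by
    intro x hx
    set I := ∫ t in Set.Ioi x, |g t| with hIdef
    set A := ∫ t in Set.Ioi x, g t ^ 2 * Real.exp (γ * t) with hAdef
    have hInn : 0 ≤ I := setIntegral_nonneg measurableSet_Ioi (fun t _ => abs_nonneg _)
    have hA0 : 0 ≤ A := setIntegral_nonneg measurableSet_Ioi (fun t _ => by positivity)
    have hAint : IntegrableOn (fun t => g t ^ 2 * Real.exp (γ * t)) (Set.Ioi x) :=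
      hg_int.mono_set (Ioi_subset_Ioi hx)
    have hAK : A ≤ K := by
      refine setIntegral_mono_set hg_int (ae_of_all _ (fun t => by positivity)) ?_
      exact HasSubset.Subset.eventuallyLE (Ioi_subset_Ioi hx)
    have hB : ∫ t in Set.Ioi x, Real.exp (-γ * t) = Real.exp (-γ * x) / γ :=
      myIntegral_exp_neg_mul_Ioi x hγ
    have hBpos : 0 < Real.exp (-γ * x) / γ := by positivity
    have hxeps : ∀ ε : ℝ, 0 < ε → 2 * I ≤ ε * A + (Real.exp (-γ * x) / γ) / ε := by
      intro ε hε
      have hint1 : IntegrableOn (fun t => 2 * |g t|) (Set.Ioi x) := (hgx x hx).abs.const_mul 2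
      have hint2 : IntegrableOn
          (fun t => ε * (g t ^ 2 * Real.exp (γ * t)) + Real.exp (-γ * t) / ε) (Set.Ioi x) :=
        (hAint.const_mul ε).add ((exp_neg_integrableOn_Ioi x hγ).div_const ε)
      have hmono := integral_mono hint1 hint2 (fun t => hptg ε hε t)
      rw [integral_const_mul, integral_add (hAint.const_mul ε)
        ((exp_neg_integrableOn_Ioi x hγ).div_const ε), integral_const_mul,
        integral_div, hB] at hmono
      exact hmono
    have hCS := myCS hInn hA0 hBpos hxeps
    have habs : |h x| ≤ I := by
      rw [htail x hx, abs_neg]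
      calc |∫ t in Set.Ioi x, g t| = ‖∫ t in Set.Ioi x, g t‖ := (Real.norm_eq_abs _).symm
        _ ≤ ∫ t in Set.Ioi x, ‖g t‖ := norm_integral_le_integral_norm _
        _ = I := by simp [Real.norm_eq_abs, hIdef]
    calc h x ^ 2 = |h x| ^ 2 := (sq_abs _).symm
      _ ≤ I ^ 2 := pow_le_pow_left₀ (abs_nonneg _) habs 2
      _ ≤ A * (Real.exp (-γ * x) / γ) := hCS
      _ ≤ K * (Real.exp (-γ * x) / γ) := mul_le_mul_of_nonneg_right hAK hBpos.le
  -- measurability of h on (0,∞)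
  set g' := (Set.Ioi (0:ℝ)).indicator g with hg'def
  have hg'int : Integrable g' := (integrable_indicator_iff measurableSet_Ioi).2 hg1
  have hHeq : ∀ x ≥ (0:ℝ), h 0 + (∫ t in (0:ℝ)..x, g' t) = h x := by
    intro x hx
    rw [hFTC x hx]
    congr 1
    rw [intervalIntegral.integral_of_le hx, intervalIntegral.integral_of_le hx]
    exact setIntegral_congr_fun measurableSet_Ioc
      (fun t ht => indicator_of_mem (mem_Ioi.2 ht.1) g)
  have hmeas_h : AEStronglyMeasurable h (volume.restrict (Set.Ioi 0)) := by
    refine (hg'int.continuous_primitive 0).aestronglyMeasurable.const_add (h 0)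
      |>.restrict.congr ?_
    filter_upwards [ae_restrict_mem measurableSet_Ioi] with x hx
    exact hHeq x (le_of_lt hx)
  have hexpm : ∀ c : ℝ, AEStronglyMeasurable (fun x : ℝ => Real.exp (c * x))
      (volume.restrict (Set.Ioi 0)) := fun c =>
    (Real.continuous_exp.comp (continuous_const.mul continuous_id)).aestronglyMeasurable.restrict
  -- first L² estimate
  have hsq_exp : ∀ (f : ℝ → ℝ) (x : ℝ), (f x * Real.exp (β / 2 * x)) ^ 2
      = f x ^ 2 * Real.exp (β * x) := by
    intro f x
    rw [mul_pow]
    congr 1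
    rw [pow_two, ← Real.exp_add]
    congr 1
    ring
  have hφmeas : AEStronglyMeasurable (fun x => (h x * Real.exp (β / 2 * x)) ^ 2)
      (volume.restrict (Set.Ioi 0)) := by
    have h1 := hmeas_h.mul (hexpm (β / 2))
    exact (h1.mul h1).congr (ae_of_all _ (fun x => by simp only [Pi.mul_apply]; ring))
  have hφbound : ∀ x ∈ Set.Ioi (0:ℝ), (h x * Real.exp (β / 2 * x)) ^ 2
      ≤ K / γ * Real.exp (-(γ - β) * x) := by
    intro x hx
    rw [hsq_exp h x]
    have hb := hpb x (le_of_lt hx)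
    have e5 : Real.exp (-γ * x) * Real.exp (β * x) = Real.exp (-(γ - β) * x) := by
      rw [← Real.exp_add]; congr 1; ring
    calc h x ^ 2 * Real.exp (β * x)
        ≤ K * (Real.exp (-γ * x) / γ) * Real.exp (β * x) :=
          mul_le_mul_of_nonneg_right hb (Real.exp_pos _).le
      _ = K / γ * (Real.exp (-γ * x) * Real.exp (β * x)) := by ring
      _ = K / γ * Real.exp (-(γ - β) * x) := by rw [e5]
  have hdom : IntegrableOn (fun x => K / γ * Real.exp (-(γ - β) * x)) (Set.Ioi 0) :=
    (exp_neg_integrableOn_Ioi 0 hγβ).const_mul _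
  have hφint : IntegrableOn (fun x => (h x * Real.exp (β / 2 * x)) ^ 2) (Set.Ioi 0) := by
    refine Integrable.mono' hdom hφmeas ?_
    filter_upwards [ae_restrict_mem measurableSet_Ioi] with x hx
    rw [Real.norm_eq_abs, abs_of_nonneg (sq_nonneg _)]
    exact hφbound x hx
  have hIexp : ∫ x in Set.Ioi (0:ℝ), Real.exp (-(γ - β) * x) = 1 / (γ - β) := by
    rw [myIntegral_exp_neg_mul_Ioi 0 hγβ]
    norm_num
  have hφval : (∫ x in Set.Ioi (0:ℝ), (h x * Real.exp (β / 2 * x)) ^ 2)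
      ≤ K / γ * (1 / (γ - β)) := by
    have hm := integral_mono_ae hφint hdom
      ((ae_restrict_iff' measurableSet_Ioi).2 (ae_of_all _ hφbound))
    rwa [integral_const_mul, hIexp] at hm
  have hφle : (∫ x in Set.Ioi (0:ℝ), (h x * Real.exp (β / 2 * x)) ^ 2)
      ≤ 1 / (γ * (γ - β)) * (|h 0| ^ 2 + K) := by
    have hpos : 0 < γ * (γ - β) := mul_pos hγ hγβ
    have heq : 1 / (γ * (γ - β)) * (|h 0| ^ 2 + K) - K / γ * (1 / (γ - β))
        = |h 0| ^ 2 / (γ * (γ - β)) := by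
      field_simp
      ring
    have hge : 0 ≤ |h 0| ^ 2 / (γ * (γ - β)) := by positivity
    linarith
  -- second L² estimate
  have hψbound : ∀ x ∈ Set.Ioi (0:ℝ), ((g x + β / 2 * h x) * Real.exp (β / 2 * x)) ^ 2
      ≤ 2 * (g x ^ 2 * Real.exp (γ * x)) + β ^ 2 / 2 * (K / γ * Real.exp (-(γ - β) * x)) := by
    intro x hx
    rw [hsq_exp (fun x => g x + β / 2 * h x) x]
    have e2 : (g x + β / 2 * h x) ^ 2 ≤ 2 * g x ^ 2 + β ^ 2 / 2 * h x ^ 2 := by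
      nlinarith [sq_nonneg (g x - β / 2 * h x)]
    have e3 : Real.exp (β * x) ≤ Real.exp (γ * x) := by
      apply Real.exp_le_exp.2
      nlinarith [le_of_lt (mem_Ioi.1 hx)]
    have e4 : h x ^ 2 * Real.exp (β * x) ≤ K / γ * Real.exp (-(γ - β) * x) := by
      rw [← hsq_exp h x]
      exact hφbound x hx
    have t1 : g x ^ 2 * Real.exp (β * x) ≤ g x ^ 2 * Real.exp (γ * x) :=
      mul_le_mul_of_nonneg_left e3 (sq_nonneg _)
    have t3 := mul_le_mul_of_nonneg_left e4 (by positivity : (0:ℝ) ≤ β ^ 2 / 2)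
    calc (g x + β / 2 * h x) ^ 2 * Real.exp (β * x)
        ≤ (2 * g x ^ 2 + β ^ 2 / 2 * h x ^ 2) * Real.exp (β * x) :=
          mul_le_mul_of_nonneg_right e2 (Real.exp_pos _).le
      _ = 2 * (g x ^ 2 * Real.exp (β * x)) + β ^ 2 / 2 * (h x ^ 2 * Real.exp (β * x)) := by
          ring
      _ ≤ 2 * (g x ^ 2 * Real.exp (γ * x)) + β ^ 2 / 2 * (K / γ * Real.exp (-(γ - β) * x)) := by
          linarith
  have hdom2 : IntegrableOn (fun x => 2 * (g x ^ 2 * Real.exp (γ * x))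
      + β ^ 2 / 2 * (K / γ * Real.exp (-(γ - β) * x))) (Set.Ioi 0) :=
    (hg_int.const_mul 2).add ((hdom).const_mul (β ^ 2 / 2))
  have hψmeas : AEStronglyMeasurable (fun x => ((g x + β / 2 * h x) * Real.exp (β / 2 * x)) ^ 2)
      (volume.restrict (Set.Ioi 0)) := by
    have h1 := (hg_meas.aestronglyMeasurable.restrict.add (hmeas_h.const_mul (β / 2))).mul
      (hexpm (β / 2))
    exact (h1.mul h1).congr (ae_of_all _ (fun x => by simp only [Pi.mul_apply, Pi.add_apply]; ring))
  have hψint : IntegrableOn (fun x => ((g x + β / 2 * h x) * Real.exp (β / 2 * x)) ^ 2)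
      (Set.Ioi 0) := by
    refine Integrable.mono' hdom2 hψmeas ?_
    filter_upwards [ae_restrict_mem measurableSet_Ioi] with x hx
    rw [Real.norm_eq_abs, abs_of_nonneg (sq_nonneg _)]
    exact hψbound x hx
  have hψval : (∫ x in Set.Ioi (0:ℝ), ((g x + β / 2 * h x) * Real.exp (β / 2 * x)) ^ 2)
      ≤ 2 * K + β ^ 2 / 2 * (K / γ * (1 / (γ - β))) := by
    have hm := integral_mono_ae hψint hdom2
      ((ae_restrict_iff' measurableSet_Ioi).2 (ae_of_all _ hψbound))
    rwa [integral_add (hg_int.const_mul 2) (hdom.const_mul (β ^ 2 / 2)), integral_const_mul,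
      integral_const_mul, integral_const_mul, hIexp, ← hKdef] at hm
  have hψle : (∫ x in Set.Ioi (0:ℝ), ((g x + β / 2 * h x) * Real.exp (β / 2 * x)) ^ 2)
      ≤ (2 + β ^ 2 / (2 * γ * (γ - β))) * (|h 0| ^ 2 + K) := by
    have hpos : 0 < γ * (γ - β) := mul_pos hγ hγβ
    have heq : β ^ 2 / 2 * (K / γ * (1 / (γ - β))) = β ^ 2 / (2 * γ * (γ - β)) * K := by
      field_simp
    have hc : 0 ≤ β ^ 2 / (2 * γ * (γ - β)) := by positivity
    have hh0 : 0 ≤ |h 0| ^ 2 := sq_nonneg _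
    nlinarith [hψval, mul_nonneg hc hh0]
  -- the fundamental theorem of calculus part
  set M := ∫ s in Set.Ioi (0:ℝ), |g s| with hMdef
  have habs_int : ∀ x ≥ (0:ℝ), |∫ t in Set.Ioi x, g t| ≤ ∫ t in Set.Ioi x, |g t| := by
    intro x hx
    calc |∫ t in Set.Ioi x, g t| = ‖∫ t in Set.Ioi x, g t‖ := (Real.norm_eq_abs _).symm
      _ ≤ ∫ t in Set.Ioi x, ‖g t‖ := norm_integral_le_integral_norm _
      _ = ∫ t in Set.Ioi x, |g t| := by simp [Real.norm_eq_abs]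
  have hMbd : ∀ t ≥ (0:ℝ), |h t| ≤ M := by
    intro t ht
    rw [htail t ht, abs_neg]
    refine (habs_int t ht).trans ?_
    exact setIntegral_mono_set hg1.abs (ae_of_all _ (fun s => abs_nonneg _))
      (HasSubset.Subset.eventuallyLE (Ioi_subset_Ioi ht))
  set Pc := fun t : ℝ => ∫ s in (0:ℝ)..t, g' s with hPcdef
  have hPc_cont : Continuous Pc := hg'int.continuous_primitive 0
  have hPc_eq : ∀ t : ℝ, 0 ≤ t → Pc t = ∫ s in Set.Ioc 0 t, g s := by
    intro t ht
    show (∫ s in (0:ℝ)..t, g' s) = _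
    rw [intervalIntegral.integral_of_le ht]
    exact setIntegral_congr_fun measurableSet_Ioc
      (fun s hs => indicator_of_mem (mem_Ioi.2 hs.1) g)
  have hPc_bd : ∀ t : ℝ, 0 ≤ t → |Pc t| ≤ M := by
    intro t ht
    rw [hPc_eq t ht]
    calc |∫ s in Set.Ioc 0 t, g s| = ‖∫ s in Set.Ioc 0 t, g s‖ := (Real.norm_eq_abs _).symm
      _ ≤ ∫ s in Set.Ioc 0 t, ‖g s‖ := norm_integral_le_integral_norm _
      _ = ∫ s in Set.Ioc 0 t, |g s| := by simp [Real.norm_eq_abs]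
      _ ≤ M := setIntegral_mono_set hg1.abs (ae_of_all _ (fun s => abs_nonneg _))
          (HasSubset.Subset.eventuallyLE Ioc_subset_Ioi_self)
  have hpart1 : ∀ x ≥ (0:ℝ), h x * Real.exp (β / 2 * x)
      = h 0 + ∫ t in (0:ℝ)..x, (g t + β / 2 * h t) * Real.exp (β / 2 * t) := by
    intro x hx
    set k := fun t : ℝ => β / 2 * Real.exp (β / 2 * t) with hkdef
    have hk_cont : Continuous k :=
      continuous_const.mul (Real.continuous_exp.comp (continuous_const.mul continuous_id))
    have hk_int : IntegrableOn k (Set.Ioc 0 x) := hk_cont.integrableOn_Ioc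
    have hk_val : ∫ t in Set.Ioc 0 x, k t = Real.exp (β / 2 * x) - 1 := by
      rw [hkdef]
      rw [myIntegral_exp_Ioc (β / 2) hx]
      simp
    have hgIoc : IntegrableOn g (Set.Ioc 0 x) := hg1.mono_set Ioc_subset_Ioi_self
    -- integrability of the pieces on Ioc 0 x
    have hint_ge : IntegrableOn (fun t => g t * Real.exp (β / 2 * t)) (Set.Ioc 0 x) := by
      refine Integrable.mono' (hgIoc.abs.const_mul (Real.exp (β / 2 * x)))
        ((hg_meas.aestronglyMeasurable.mul
          (Real.continuous_exp.comp (continuous_const.mul continuous_id)).aestronglyMeasurable).restrict) ?_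
      filter_upwards [ae_restrict_mem measurableSet_Ioc] with t ht
      rw [Real.norm_eq_abs, abs_mul, abs_of_nonneg (Real.exp_pos _).le]
      exact mul_le_mul_of_nonneg_left
        (Real.exp_le_exp.2 (by nlinarith [ht.2, hβ] : β / 2 * t ≤ β / 2 * x)) (abs_nonneg _)
        |>.trans_eq (mul_comm _ _)
    have hmeas_hIoc : AEStronglyMeasurable h (volume.restrict (Set.Ioc 0 x)) :=
      hmeas_h.mono_measure (Measure.restrict_mono Ioc_subset_Ioi_self le_rfl)
    have hconst1 : IntegrableOn (fun _ : ℝ => β / 2 * Real.exp (β / 2 * x) * (|h 0| + M))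
        (Set.Ioc 0 x) := integrableOn_const measure_Ioc_lt_top.ne
    have hint_he : IntegrableOn (fun t => k t * (h 0 + Pc t)) (Set.Ioc 0 x) := by
      refine Integrable.mono' hconst1
        ((hk_cont.aestronglyMeasurable.mul
          (continuous_const.add hPc_cont).aestronglyMeasurable).restrict) ?_
      filter_upwards [ae_restrict_mem measurableSet_Ioc] with t ht
      rw [Real.norm_eq_abs, abs_mul]
      have h1 : |k t| ≤ β / 2 * Real.exp (β / 2 * x) := by
        rw [hkdef, abs_mul, abs_of_nonneg (by positivity : (0:ℝ) ≤ β / 2),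
          abs_of_nonneg (Real.exp_pos _).le]
        exact mul_le_mul_of_nonneg_left
          (Real.exp_le_exp.2 (by nlinarith [ht.2, hβ] : β / 2 * t ≤ β / 2 * x)) (by positivity)
      have h2 : |h 0 + Pc t| ≤ |h 0| + M :=
        (abs_add_le _ _).trans (add_le_add_right (hPc_bd t ht.1.le) _)
      exact mul_le_mul h1 h2 (abs_nonneg _) (by positivity)
    have hconst2 : IntegrableOn (fun _ : ℝ => β / 2 * Real.exp (β / 2 * x) * M)
        (Set.Ioc 0 x) := integrableOn_const measure_Ioc_lt_top.ne
    have hint_kPc : IntegrableOn (fun t => k t * Pc t) (Set.Ioc 0 x) := by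
      refine Integrable.mono' hconst2
        ((hk_cont.aestronglyMeasurable.mul hPc_cont.aestronglyMeasurable).restrict) ?_
      filter_upwards [ae_restrict_mem measurableSet_Ioc] with t ht
      rw [Real.norm_eq_abs, abs_mul]
      have h1 : |k t| ≤ β / 2 * Real.exp (β / 2 * x) := by
        rw [hkdef, abs_mul, abs_of_nonneg (by positivity : (0:ℝ) ≤ β / 2),
          abs_of_nonneg (Real.exp_pos _).le]
        exact mul_le_mul_of_nonneg_left
          (Real.exp_le_exp.2 (by nlinarith [ht.2, hβ] : β / 2 * t ≤ β / 2 * x)) (by positivity)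
      have hM0 : 0 ≤ M := setIntegral_nonneg measurableSet_Ioi (fun s _ => abs_nonneg _)
      exact mul_le_mul h1 (hPc_bd t ht.1.le) (abs_nonneg _) (by positivity)
    -- Fubini computation
    have hFub : ∫ t in Set.Ioc 0 x, k t * Pc t
        = ∫ s in Set.Ioc 0 x, (Real.exp (β / 2 * x) - Real.exp (β / 2 * s)) * g s := by
      set μ := volume.restrict (Set.Ioc (0:ℝ) x) with hμdef
      set F := fun p : ℝ × ℝ => if p.2 ≤ p.1 then k p.1 * g p.2 else 0 with hFdef
      have hFmeas : AEStronglyMeasurable F (μ.prod μ) := by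
        refine (Measurable.ite (measurableSet_le measurable_snd measurable_fst)
          ((hk_cont.measurable.comp measurable_fst).mul (hg_meas.comp measurable_snd))
          measurable_const).aestronglyMeasurable
      have hFint : Integrable F (μ.prod μ) := by
        refine Integrable.mono'
          ((Integrable.mul_prod hk_int.abs hgIoc.abs) :
            Integrable (fun p : ℝ × ℝ => |k p.1| * |g p.2|) (μ.prod μ)) hFmeas
          (ae_of_all _ (fun p => ?_))
        rw [Real.norm_eq_abs, hFdef]
        by_cases hc : p.2 ≤ p.1
        · simp only [hc, if_true]
          rw [abs_mul]
        · simp only [hc, if_false, abs_zero]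
          positivity
      have hswap : ∫ t, (∫ s, F (t, s) ∂μ) ∂μ = ∫ s, (∫ t, F (t, s) ∂μ) ∂μ :=
        integral_integral_swap hFint
      have hlhs : ∫ t in Set.Ioc 0 x, k t * Pc t = ∫ t, (∫ s, F (t, s) ∂μ) ∂μ := by
        refine setIntegral_congr_fun measurableSet_Ioc (fun t ht => ?_)
        have hPt : Pc t = ∫ s, (if s ≤ t then g s else 0) ∂μ := by
          rw [hPc_eq t ht.1.le, hμdef]
          have : ∀ s ∈ Set.Ioc (0:ℝ) x, (if s ≤ t then g s else 0)
              = (Set.Ioc (0:ℝ) t).indicator g s := by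
            intro s hs
            by_cases hc : s ≤ t
            · simp [hc, indicator_of_mem, mem_Ioc, hs.1]
            · simp [hc, indicator_of_notMem, mem_Ioc]
          rw [setIntegral_congr_fun measurableSet_Ioc this, setIntegral_indicator measurableSet_Ioc,
            inter_eq_self_of_subset_right (Ioc_subset_Ioc_right ht.2)]
        rw [hPt, ← integral_const_mul]
        refine integral_congr_ae (ae_of_all _ (fun s => ?_))
        rw [hFdef]
        by_cases hc : s ≤ t
        · simp [hc]
        · simp [hc]
      have hrhs : ∫ s, (∫ t, F (t, s) ∂μ) ∂μ
          = ∫ s in Set.Ioc 0 x, (Real.exp (β / 2 * x) - Real.exp (β / 2 * s)) * g s := by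
        refine setIntegral_congr_fun measurableSet_Ioc (fun s hs => ?_)
        have hin : ∫ t, F (t, s) ∂μ = ∫ t in Set.Ioc 0 x, (Set.Ici s).indicator
            (fun t => k t * g s) t := by
          refine integral_congr_ae (ae_of_all _ (fun t => ?_))
          rw [hFdef]
          by_cases hc : s ≤ t
          · simp [hc, indicator_of_mem, mem_Ici]
          · simp [hc, indicator_of_notMem, mem_Ici]
        rw [hin, setIntegral_indicator measurableSet_Ici]
        have hset : Set.Ioc (0:ℝ) x ∩ Set.Ici s = Set.Icc s x := by
          ext t
          simp only [mem_inter_iff, mem_Ioc, mem_Ici, mem_Icc]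
          constructor
          · rintro ⟨⟨_, h2⟩, h3⟩; exact ⟨h3, h2⟩
          · rintro ⟨h1, h2⟩; exact ⟨⟨lt_of_lt_of_le hs.1 h1, h2⟩, h1⟩
        rw [hset, integral_Icc_eq_integral_Ioc, integral_mul_const,
          myIntegral_exp_Ioc (β / 2) hs.2]
      rw [hlhs, hswap, hrhs]
    -- assemble everything
    rw [intervalIntegral.integral_of_le hx]
    have hcongr : ∫ t in Set.Ioc 0 x, (g t + β / 2 * h t) * Real.exp (β / 2 * t)
        = ∫ t in Set.Ioc 0 x, (g t * Real.exp (β / 2 * t) + k t * (h 0 + Pc t)) := by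
      refine setIntegral_congr_fun measurableSet_Ioc (fun t ht => ?_)
      have hht : h t = h 0 + Pc t := by
        rw [hFTC t ht.1.le, hPc_eq t ht.1.le, intervalIntegral.integral_of_le ht.1.le]
      rw [hht, hkdef]
      ring
    rw [hcongr, integral_add hint_ge hint_he]
    have hsplit2 : ∫ t in Set.Ioc 0 x, k t * (h 0 + Pc t)
        = h 0 * (∫ t in Set.Ioc 0 x, k t) + ∫ t in Set.Ioc 0 x, k t * Pc t := by
      rw [← integral_const_mul, ← integral_add (hk_int.const_mul (h 0)) hint_kPc]
      refine setIntegral_congr_fun measurableSet_Ioc (fun t ht => ?_)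
      ring
    rw [hsplit2, hk_val, hFub]
    have hJ : ∫ s in Set.Ioc 0 x, (Real.exp (β / 2 * x) - Real.exp (β / 2 * s)) * g s
        = Real.exp (β / 2 * x) * (∫ s in Set.Ioc 0 x, g s)
          - ∫ s in Set.Ioc 0 x, g s * Real.exp (β / 2 * s) := by
      rw [← integral_const_mul, ← integral_sub (hgIoc.const_mul _) hint_ge]
      refine setIntegral_congr_fun measurableSet_Ioc (fun s hs => ?_)
      ring
    rw [hJ]
    have hhx : h x = h 0 + ∫ s in Set.Ioc 0 x, g s := by
      rw [hFTC x hx, intervalIntegral.integral_of_le hx]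
    rw [hhx]
    ring
  refine ⟨hpart1, hφint, hφle, hψint, hψle, ?_⟩
  have hcoef : 1 / (γ * (γ - β)) * (|h 0| ^ 2 + K)
      + (2 + β ^ 2 / (2 * γ * (γ - β))) * (|h 0| ^ 2 + K)
      = (2 + (1 + β ^ 2 / 2) / (γ * (γ - β))) * (|h 0| ^ 2 + K) := by
    rw [← add_mul]
    congr 1
    field_simp
    ring
  linarith [hφle, hψle]
end

section
/- Let γ > β > 0 and set δ = (β+γ)/2. For every h lying in H_γ with weak derivative g and with h(∞) := lim_{x→∞} h(x) = 0, one has ∫₀^∞ |h(x)| e^{(β/2)x} dx ≤ (1/√((δ−β) δ (γ−δ))) ‖h‖_γ. In particular the function x ↦ h(x) e^{(β/2)x} is integrable on [0,∞) and its even reflection x ↦ h(|x|) e^{(β/2)|x|} belongs to L¹(ℝ) with L¹-norm at most (2/√((δ−β) δ (γ−δ))) ‖h‖_γ. -/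
open MeasureTheory Real Filter Set


lemma my_integral_exp_neg_Ioi {b : ℝ} (hb : 0 < b) (a : ℝ) :
    ∫ x in Ioi a, Real.exp (-b * x) = Real.exp (-b * a) / b := by
  have hd : ∀ x ∈ Ici a, HasDerivAt (fun x => -Real.exp (-b * x) / b) (Real.exp (-b * x)) x := by
    intro x _
    have h1 : HasDerivAt (fun x : ℝ => -b * x) (-b) x := by simpa using (hasDerivAt_id x).const_mul (-b)
    have h2 := h1.exp
    have h3 : HasDerivAt (fun x => -Real.exp (-b * x) / b) (-(Real.exp (-b * x) * -b) / b) x := (h2.neg).div_const b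
    convert h3 using 1
    field_simp
  have ht : Tendsto (fun x => -Real.exp (-b * x) / b) atTop (nhds 0) := by
    have : Tendsto (fun x : ℝ => Real.exp (-b * x)) atTop (nhds 0) := by
      have := Real.tendsto_exp_atBot.comp (tendsto_id.const_mul_atTop_of_neg (neg_lt_zero.2 hb))
      exact this
    have := (this.neg).div_const b
    simpa using this
  have := integral_Ioi_of_hasDerivAt_of_tendsto' hd (exp_neg_integrableOn_Ioi a hb) ht
  rw [this]; field_simp; ring

-- integrability of g on Ioi 0
lemma g_int {γ : ℝ} (hγ : 0 < γ) {g : ℝ → ℝ} (hg_meas : Measurable g)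
    (hg_int : IntegrableOn (fun t => g t ^ 2 * Real.exp (γ * t)) (Set.Ioi 0)) :
    IntegrableOn g (Set.Ioi 0) := by
  have hmaj : IntegrableOn (fun t => (g t ^ 2 * Real.exp (γ * t) + Real.exp (-γ * t)) / 2)
      (Set.Ioi 0) := ((hg_int.add (exp_neg_integrableOn_Ioi 0 hγ)).div_const 2)
  refine Integrable.mono hmaj (hg_meas.aestronglyMeasurable.restrict) ?_
  refine Eventually.of_forall fun t => ?_
  rw [Real.norm_eq_abs, Real.norm_eq_abs]
  have h1 : |g t| = (|g t| * Real.exp (γ * t / 2)) * Real.exp (-(γ * t / 2)) := by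
    rw [mul_assoc, ← Real.exp_add]; simp
  have h2 : (|g t| * Real.exp (γ * t / 2)) * Real.exp (-(γ * t / 2)) ≤
      ((|g t| * Real.exp (γ * t / 2)) ^ 2 + (Real.exp (-(γ * t / 2))) ^ 2) / 2 := by
    nlinarith [sq_nonneg (|g t| * Real.exp (γ * t / 2) - Real.exp (-(γ * t / 2)))]
  have h3 : (|g t| * Real.exp (γ * t / 2)) ^ 2 = g t ^ 2 * Real.exp (γ * t) := by
    rw [mul_pow, sq_abs, ← Real.exp_nat_mul]; ring_nf
  have h4 : (Real.exp (-(γ * t / 2))) ^ 2 = Real.exp (-γ * t) := by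
    rw [← Real.exp_nat_mul]; ring_nf
  calc |g t| = _ := h1
    _ ≤ _ := h2
    _ = (g t ^ 2 * Real.exp (γ * t) + Real.exp (-γ * t)) / 2 := by rw [h3, h4]
    _ ≤ |(g t ^ 2 * Real.exp (γ * t) + Real.exp (-γ * t)) / 2| := le_abs_self _

lemma h_repr {γ : ℝ} {h g : ℝ → ℝ}
    (hg1 : IntegrableOn g (Set.Ioi 0))
    (hFTC : ∀ x ≥ (0 : ℝ), h x = h 0 + ∫ t in (0:ℝ)..x, g t)
    (hlim : Tendsto h atTop (nhds 0)) :
    ∀ x ≥ (0:ℝ), h x = -∫ t in Set.Ioi x, g t := by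
  intro x hx
  have hgx : IntegrableOn g (Set.Ioi x) := hg1.mono_set (Ioi_subset_Ioi hx)
  have ht1 : Tendsto (fun y => ∫ t in x..y, g t) atTop (nhds (∫ t in Set.Ioi x, g t)) :=
    intervalIntegral_tendsto_integral_Ioi x hgx tendsto_id
  have heq : ∀ᶠ y in atTop, h y = h x + ∫ t in x..y, g t := by
    filter_upwards [eventually_ge_atTop x] with y hy
    have hy0 : (0:ℝ) ≤ y := le_trans hx hy
    have i1 : IntervalIntegrable g volume 0 x := by
      rw [intervalIntegrable_iff_integrableOn_Ioc_of_le hx]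
      exact hg1.mono_set Ioc_subset_Ioi_self
    have i2 : IntervalIntegrable g volume x y := by
      rw [intervalIntegrable_iff_integrableOn_Ioc_of_le hy]
      exact hgx.mono_set Ioc_subset_Ioi_self
    rw [hFTC y hy0, hFTC x hx, ← intervalIntegral.integral_add_adjacent_intervals i1 i2]
    ring
  have ht2 : Tendsto (fun y => h x + ∫ t in x..y, g t) atTop
      (nhds (h x + ∫ t in Set.Ioi x, g t)) := (tendsto_const_nhds.add ht1)
  have := hlim.congr' heq
  have h0 := tendsto_nhds_unique this ht2
  linarith



lemma g_l1_bound {γ : ℝ} (hγ : 0 < γ) {g : ℝ → ℝ} (hg_meas : Measurable g)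
    (hg_int : IntegrableOn (fun t => g t ^ 2 * Real.exp (γ * t)) (Set.Ioi 0))
    (hg1 : IntegrableOn g (Set.Ioi 0)) :
    ∀ x ≥ (0:ℝ), (∫ t in Set.Ioi x, |g t|) ≤
      Real.sqrt ((∫ t in Set.Ioi 0, g t ^ 2 * Real.exp (γ * t)) / γ) *
        Real.exp (-(γ/2) * x) := by
  set I := ∫ t in Set.Ioi 0, g t ^ 2 * Real.exp (γ * t) with hIdef
  have hI0 : 0 ≤ I := setIntegral_nonneg measurableSet_Ioi (fun t _ => by positivity)
  intro x hx
  have hsub : Set.Ioi x ⊆ Set.Ioi 0 := Ioi_subset_Ioi hx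
  have hgx : IntegrableOn g (Set.Ioi x) := hg1.mono_set hsub
  rcases eq_or_lt_of_le hI0 with hI | hI
  · -- I = 0 case: g = 0 a.e. on Ioi 0
    have hnn : 0 ≤ᵐ[volume.restrict (Set.Ioi 0)] fun t => g t ^ 2 * Real.exp (γ * t) :=
      Eventually.of_forall fun t => by positivity
    have hz : (fun t => g t ^ 2 * Real.exp (γ * t)) =ᵐ[volume.restrict (Set.Ioi 0)] 0 :=
      (integral_eq_zero_iff_of_nonneg_ae hnn hg_int).mp hI.symm
    have hz2 : (fun t => |g t|) =ᵐ[volume.restrict (Set.Ioi x)] 0 := by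
      have := ae_restrict_of_ae_restrict_of_subset hsub hz
      filter_upwards [this] with t ht
      have ht' : g t ^ 2 * Real.exp (γ * t) = 0 := ht
      have hg0 : g t = 0 := by
        rcases mul_eq_zero.mp ht' with h' | h'
        · exact pow_eq_zero_iff two_ne_zero |>.mp h'
        · exact absurd h' (Real.exp_ne_zero _)
      simp [hg0]
    have hzero : (∫ t in Set.Ioi x, |g t|) = 0 := by
      rw [integral_congr_ae hz2]; simp
    rw [hzero]; positivity
  · -- I > 0
    set E := Real.exp (-(γ/2) * x) with hE
    set s := E / Real.sqrt (γ * I) with hs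
    have hr0 : 0 < Real.sqrt (γ * I) := Real.sqrt_pos.mpr (by positivity)
    have hspos : 0 < s := div_pos (Real.exp_pos _) hr0
    have hpt : ∀ t, |g t| ≤ (s/2) * (g t ^ 2 * Real.exp (γ * t)) + (1/(2*s)) * Real.exp (-γ * t) := by
      intro t
      have h1 : |g t| = (|g t| * Real.exp (γ * t / 2)) * Real.exp (-(γ * t / 2)) := by
        rw [mul_assoc, ← Real.exp_add]; simp
      have h3 : (|g t| * Real.exp (γ * t / 2)) ^ 2 = g t ^ 2 * Real.exp (γ * t) := by
        rw [mul_pow, sq_abs, ← Real.exp_nat_mul]; ring_nf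
      have h4 : (Real.exp (-(γ * t / 2))) ^ 2 = Real.exp (-γ * t) := by
        rw [← Real.exp_nat_mul]; ring_nf
      set a := |g t| * Real.exp (γ * t / 2)
      set b := Real.exp (-(γ * t / 2))
      rw [h1, ← h3, ← h4]
      have key : 2*s*(a*b) ≤ s^2*a^2 + b^2 := by nlinarith [sq_nonneg (s*a - b)]
      have h2s : 0 < 2*s := by linarith
      calc a*b = (2*s*(a*b))/(2*s) := by field_simp
        _ ≤ (s^2*a^2 + b^2)/(2*s) := by exact (div_le_div_iff_of_pos_right h2s).mpr key
        _ = s/2*a^2 + 1/(2*s)*b^2 := by field_simp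
    have hint1 : IntegrableOn (fun t => |g t|) (Set.Ioi x) := hgx.abs
    have hint2 : IntegrableOn
        (fun t => (s/2) * (g t ^ 2 * Real.exp (γ * t)) + (1/(2*s)) * Real.exp (-γ * t))
        (Set.Ioi x) :=
      ((hg_int.mono_set hsub).const_mul _).add ((exp_neg_integrableOn_Ioi x hγ).const_mul _)
    have hmono := setIntegral_mono_on hint1 hint2 measurableSet_Ioi (fun t _ => hpt t)
    have hIx : (∫ t in Set.Ioi x, g t ^ 2 * Real.exp (γ * t)) ≤ I := by
      apply setIntegral_mono_set hg_int
      · exact Eventually.of_forall fun t => by positivity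
      · exact HasSubset.Subset.eventuallyLE hsub
    have hcalc : (∫ t in Set.Ioi x,
        ((s/2) * (g t ^ 2 * Real.exp (γ * t)) + (1/(2*s)) * Real.exp (-γ * t)))
        = (s/2) * (∫ t in Set.Ioi x, g t ^ 2 * Real.exp (γ * t))
          + (1/(2*s)) * (Real.exp (-γ * x) / γ) := by
      rw [integral_add ((hg_int.mono_set hsub).const_mul _)
        ((exp_neg_integrableOn_Ioi x hγ).const_mul _), integral_const_mul, integral_const_mul,
        my_integral_exp_neg_Ioi hγ x]
    have hle : (∫ t in Set.Ioi x, |g t|) ≤ (s/2) * I + (1/(2*s)) * (Real.exp (-γ * x) / γ) := by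
      rw [hcalc] at hmono
      have := mul_le_mul_of_nonneg_left hIx (by positivity : (0:ℝ) ≤ s/2)
      linarith
    -- now show RHS equals sqrt(I/γ) * E
    have hEx : Real.exp (-γ * x) = E ^ 2 := by
      rw [hE, ← Real.exp_nat_mul]; ring_nf
    have hkey : (s/2) * I + (1/(2*s)) * (Real.exp (-γ * x) / γ) = Real.sqrt (I/γ) * E := by
      rw [hEx, hs]
      set u := Real.sqrt γ with hu
      set v := Real.sqrt I with hv
      have hu2 : u ^ 2 = γ := Real.sq_sqrt hγ.le
      have hv2 : v ^ 2 = I := Real.sq_sqrt hI0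
      have hupos : 0 < u := Real.sqrt_pos.mpr hγ
      have hvpos : 0 < v := Real.sqrt_pos.mpr hI
      have hmul : Real.sqrt (γ * I) = u * v := Real.sqrt_mul hγ.le I
      have hdiv : Real.sqrt (I / γ) = v / u := Real.sqrt_div hI0 γ
      rw [hmul, hdiv, ← hu2, ← hv2]
      have hEpos : 0 < E := Real.exp_pos _
      field_simp
      ring
    linarith


/-- If `γ > β > 0`, `δ = (β+γ)/2`, and `h` lies in `H_γ` with weak derivative `g` and
`h(∞) = 0`, then `x ↦ h(x)e^{(β/2)x}` is integrable on `[0,∞)` with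
`∫₀^∞ |h(x)| e^{(β/2)x} dx ≤ (1/√((δ-β)δ(γ-δ))) ‖h‖_γ`, and its even reflection lies in
`L¹(ℝ)` with norm at most `(2/√((δ-β)δ(γ-δ))) ‖h‖_γ`. -/
theorem L1_bound_reflection
    (β γ δ : ℝ) (hβ : 0 < β) (hβγ : β < γ) (hδ : δ = (β + γ) / 2)
    (h g : ℝ → ℝ)
    (hg_meas : Measurable g)
    (hg_int : IntegrableOn (fun t => g t ^ 2 * Real.exp (γ * t)) (Set.Ioi 0))
    (hFTC : ∀ x ≥ (0 : ℝ), h x = h 0 + ∫ t in (0:ℝ)..x, g t)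
    (hlim : Tendsto h atTop (nhds 0)) :
    IntegrableOn (fun x => |h x| * Real.exp (β / 2 * x)) (Set.Ioi 0) ∧
      (∫ x in Set.Ioi (0:ℝ), |h x| * Real.exp (β / 2 * x))
        ≤ (1 / Real.sqrt ((δ - β) * δ * (γ - δ))) *
            Real.sqrt (|h 0| ^ 2 + ∫ t in Set.Ioi (0:ℝ), g t ^ 2 * Real.exp (γ * t)) ∧
      Integrable (fun x : ℝ => h |x| * Real.exp (β / 2 * |x|)) ∧
      (∫ x : ℝ, |h |x| * Real.exp (β / 2 * |x|)|)
        ≤ (2 / Real.sqrt ((δ - β) * δ * (γ - δ))) *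
            Real.sqrt (|h 0| ^ 2 + ∫ t in Set.Ioi (0:ℝ), g t ^ 2 * Real.exp (γ * t)) := by
  have hγ : 0 < γ := lt_trans hβ hβγ
  set I := ∫ t in Set.Ioi (0:ℝ), g t ^ 2 * Real.exp (γ * t) with hIdef
  have hI0 : 0 ≤ I := setIntegral_nonneg measurableSet_Ioi (fun t _ => by positivity)
  have hg1 : IntegrableOn g (Set.Ioi 0) := g_int hγ hg_meas hg_int
  have hrepr : ∀ x ≥ (0:ℝ), h x = -∫ t in Set.Ioi x, g t := h_repr (γ := γ) hg1 hFTC hlim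
  set C := Real.sqrt (I / γ) with hC
  have hC0 : 0 ≤ C := Real.sqrt_nonneg _
  -- pointwise bound on h
  have hpt : ∀ x ≥ (0:ℝ), |h x| ≤ C * Real.exp (-(γ/2) * x) := by
    intro x hx
    rw [hrepr x hx, abs_neg]
    calc |∫ t in Set.Ioi x, g t| ≤ ∫ t in Set.Ioi x, |g t| := by
          simpa [Real.norm_eq_abs] using
            norm_integral_le_integral_norm (μ := volume.restrict (Set.Ioi x)) g
      _ ≤ C * Real.exp (-(γ/2) * x) := g_l1_bound hγ hg_meas hg_int hg1 x hx
  -- continuous version of h on [0, ∞)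
  set g' : ℝ → ℝ := (Set.Ioi 0).indicator g with hg'def
  have hg'int : ∀ a b : ℝ, IntervalIntegrable g' volume a b := by
    intro a b
    rw [intervalIntegrable_iff, IntegrableOn, integrable_indicator_iff measurableSet_Ioi,
      IntegrableOn, Measure.restrict_restrict measurableSet_Ioi]
    exact hg1.mono_set inter_subset_left
  set H : ℝ → ℝ := fun x => h 0 + ∫ t in (0:ℝ)..x, g' t with hHdef
  have hHcont : Continuous H :=
    continuous_const.add (intervalIntegral.continuous_primitive hg'int 0)
  have hHeq : ∀ x ≥ (0:ℝ), h x = H x := by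
    intro x hx
    rw [hFTC x hx, hHdef]
    congr 1
    rw [intervalIntegral.integral_of_le hx, intervalIntegral.integral_of_le hx]
    refine setIntegral_congr_fun measurableSet_Ioc (fun t ht => ?_)
    exact (Set.indicator_of_mem (Set.mem_Ioi.mpr ht.1) g).symm
  -- measurability
  have haesm : AEStronglyMeasurable (fun x => |h x| * Real.exp (β / 2 * x))
      (volume.restrict (Set.Ioi 0)) := by
    have hc : Continuous (fun x => |H x| * Real.exp (β / 2 * x)) :=
      (hHcont.abs).mul (Real.continuous_exp.comp (continuous_const.mul continuous_id))
    refine hc.aestronglyMeasurable.congr ?_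
    refine (ae_restrict_iff' measurableSet_Ioi).mpr (Eventually.of_forall fun x hx => ?_)
    dsimp only
    rw [hHeq x (le_of_lt hx)]
  -- majorant
  have hmajint : IntegrableOn (fun x => C * Real.exp (-((γ - β)/2) * x)) (Set.Ioi 0) :=
    (exp_neg_integrableOn_Ioi 0 (by linarith : 0 < (γ - β)/2)).const_mul C
  have hbound : ∀ x ∈ Set.Ioi (0:ℝ),
      |h x| * Real.exp (β / 2 * x) ≤ C * Real.exp (-((γ - β)/2) * x) := by
    intro x hx
    have h1 := hpt x (le_of_lt hx)
    have h2 : Real.exp (-(γ/2) * x) * Real.exp (β / 2 * x) = Real.exp (-((γ - β)/2) * x) := by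
      rw [← Real.exp_add]; ring_nf
    calc |h x| * Real.exp (β / 2 * x)
        ≤ (C * Real.exp (-(γ/2) * x)) * Real.exp (β / 2 * x) :=
          mul_le_mul_of_nonneg_right h1 (Real.exp_pos _).le
      _ = C * Real.exp (-((γ - β)/2) * x) := by rw [mul_assoc, h2]
  -- integrability on Ioi 0
  have hint1 : IntegrableOn (fun x => |h x| * Real.exp (β / 2 * x)) (Set.Ioi 0) := by
    refine Integrable.mono' hmajint haesm ?_
    refine (ae_restrict_iff' measurableSet_Ioi).mpr (Eventually.of_forall fun x hx => ?_)
    rw [Real.norm_eq_abs, abs_of_nonneg (by positivity)]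
    exact hbound x hx
  -- integral bound
  have hIbound : (∫ x in Set.Ioi (0:ℝ), |h x| * Real.exp (β / 2 * x))
      ≤ C * (1 / ((γ - β)/2)) := by
    have := setIntegral_mono_on hint1 hmajint measurableSet_Ioi hbound
    have hcalc : (∫ x in Set.Ioi (0:ℝ), C * Real.exp (-((γ - β)/2) * x))
        = C * (1 / ((γ - β)/2)) := by
      rw [integral_const_mul, my_integral_exp_neg_Ioi (by linarith : 0 < (γ - β)/2) 0]
      norm_num
    linarith [this, hcalc.le, hcalc.ge]
  -- the constant comparison
  set B := Real.sqrt (|h 0| ^ 2 + I) with hB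
  have hB0 : 0 ≤ B := Real.sqrt_nonneg _
  have hδpos : 0 < δ := by rw [hδ]; linarith
  have hsqrtprod : Real.sqrt ((δ - β) * δ * (γ - δ)) = ((γ - β)/2) * Real.sqrt δ := by
    have e1 : (δ - β) * δ * (γ - δ) = ((γ - β)/2)^2 * δ := by rw [hδ]; ring
    rw [e1, Real.sqrt_mul (sq_nonneg _), Real.sqrt_sq (by linarith : (0:ℝ) ≤ (γ - β)/2)]
  have hmain : C * (1 / ((γ - β)/2)) ≤ (1 / Real.sqrt ((δ - β) * δ * (γ - δ))) * B := by
    rw [hsqrtprod]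
    have hCeq : C = Real.sqrt I / Real.sqrt γ := Real.sqrt_div hI0 γ
    have hIB : Real.sqrt I ≤ B := Real.sqrt_le_sqrt (by nlinarith [sq_abs (h 0), sq_nonneg (h 0)])
    have hδγ : Real.sqrt δ ≤ Real.sqrt γ := Real.sqrt_le_sqrt (by rw [hδ]; linarith)
    have hu : 0 < Real.sqrt γ := Real.sqrt_pos.mpr hγ
    have hw : 0 < Real.sqrt δ := Real.sqrt_pos.mpr hδpos
    have hk : 0 < (γ - β)/2 := by linarith
    rw [hCeq]
    have hAB : Real.sqrt I * Real.sqrt δ ≤ B * Real.sqrt γ :=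
      mul_le_mul hIB hδγ hw.le hB0
    have e1 : Real.sqrt I / Real.sqrt γ * (1/((γ-β)/2))
        = (2*Real.sqrt I)/(Real.sqrt γ*(γ-β)) := by field_simp; try ring
    have e2 : (1/(((γ-β)/2)*Real.sqrt δ)) * B = (2*B)/((γ-β)*Real.sqrt δ) := by
      field_simp
      try ring
    rw [e1, e2, div_le_div_iff₀ (mul_pos hu (by linarith)) (mul_pos (by linarith) hw)]
    nlinarith [mul_le_mul_of_nonneg_left hAB (by linarith : (0:ℝ) ≤ 2*(γ-β))]
  -- reflection part
  set F : ℝ → ℝ := fun y => h y * Real.exp (β / 2 * y) with hF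
  have hFaesm : AEStronglyMeasurable F (volume.restrict (Set.Ioi 0)) := by
    have hc : Continuous (fun x => H x * Real.exp (β / 2 * x)) :=
      hHcont.mul (Real.continuous_exp.comp (continuous_const.mul continuous_id))
    refine hc.aestronglyMeasurable.congr ?_
    refine (ae_restrict_iff' measurableSet_Ioi).mpr (Eventually.of_forall fun x hx => ?_)
    simp only [hF]
    rw [hHeq x (le_of_lt hx)]
  have hFint : IntegrableOn F (Set.Ioi 0) := by
    refine Integrable.mono' hint1 hFaesm (Eventually.of_forall fun x => ?_)
    rw [Real.norm_eq_abs, hF]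
    dsimp only
    rw [abs_mul, abs_of_pos (Real.exp_pos _)]
  have habs : Set.EqOn F (fun x => F |x|) (Set.Ioi 0) := by
    intro x hx
    dsimp only
    rw [abs_of_pos hx]
  have hIoiabs : IntegrableOn (fun x => F |x|) (Set.Ioi 0) :=
    hFint.congr_fun habs measurableSet_Ioi
  have int_Iic : IntegrableOn (fun x => F |x|) (Set.Iic 0) := by
    rw [← Measure.map_neg_eq_self (volume : Measure ℝ)]
    have m : MeasurableEmbedding fun x : ℝ => -x := (Homeomorph.neg ℝ).measurableEmbedding
    rw [m.integrableOn_map_iff]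
    simp_rw [Function.comp_def, abs_neg, neg_preimage, neg_Iic, neg_zero]
    exact Iff.mpr integrableOn_Ici_iff_integrableOn_Ioi hIoiabs
  have hreflInt : Integrable (fun x : ℝ => F |x|) := by
    rw [← integrableOn_univ, ← Set.Iic_union_Ioi (a := (0:ℝ))]
    exact int_Iic.union hIoiabs
  have hfinal : (∫ x : ℝ, |F (|x|)|) ≤ 2 * (C * (1/((γ-β)/2))) := by
    have habs2 : (∫ x : ℝ, |F (|x|)|) = 2 * ∫ x in Set.Ioi (0:ℝ), |F x| := by
      simpa using integral_comp_abs (f := fun y => |F y|)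
    rw [habs2]
    have heqset : (∫ x in Set.Ioi (0:ℝ), |F x|)
        = ∫ x in Set.Ioi (0:ℝ), |h x| * Real.exp (β/2 * x) := by
      refine setIntegral_congr_fun measurableSet_Ioi (fun x hx => ?_)
      rw [hF]
      dsimp only
      rw [abs_mul, abs_of_pos (Real.exp_pos _)]
    rw [heqset]
    linarith [hIbound]
  refine ⟨hint1, hIbound.trans hmain, hreflInt, ?_⟩
  have h2 : (2:ℝ) / Real.sqrt ((δ - β) * δ * (γ - δ)) * B
      = 2 * ((1 / Real.sqrt ((δ - β) * δ * (γ - δ))) * B) := by ring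
  rw [h2]
  calc (∫ x : ℝ, |F (|x|)|) ≤ 2 * (C * (1/((γ-β)/2))) := hfinal
    _ ≤ 2 * ((1 / Real.sqrt ((δ - β) * δ * (γ - δ))) * B) := by linarith [hmain]
end

section
/- Let γ > β > 0, let M > 0, and let (h_j)_{j∈ℕ} be a sequence of functions, each lying in H_γ with weak derivative g_j and with h_j(∞) := lim_{x→∞} h_j(x) = 0, such that ‖h_j‖_γ ≤ M for all j. Then there exist a subsequence (h_{j_k}) and a function φ ∈ L²([0,∞), e^{βx} dx) such that ∫₀^∞ |h_{j_k}(x) − φ(x)|² e^{βx} dx → 0 as k → ∞. In other words, the embedding H⁰_γ ⊂ L²_β is compact. -/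
open MeasureTheory Real Filter Set


lemma amgm_aux (z c : ℝ) (hc : 0 < c) : 2 * |z| ≤ c * z ^ 2 + c⁻¹ := by
  rw [← mul_le_mul_iff_of_pos_right hc]
  have h3 : c⁻¹ * c = 1 := inv_mul_cancel₀ hc.ne'
  rw [← sq_abs z]
  nlinarith [sq_nonneg (c * |z| - 1), h3]

lemma exp_int_Ioi {γ : ℝ} (hγ : 0 < γ) (x : ℝ) :
    ∫ t in Set.Ioi x, Real.exp (-γ * t) = Real.exp (-γ * x) / γ := by
  have hderiv : ∀ t ∈ Set.Ici x, HasDerivAt (fun t => -Real.exp (-γ * t) / γ)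
      (Real.exp (-γ * t)) t := by
    intro t _
    have h1 : HasDerivAt (fun t : ℝ => -γ * t) (-γ) t := by
      simpa using (hasDerivAt_id t).const_mul (-γ)
    have h2' := ((h1.exp).div_const γ).neg
    have e1 : (fun t => -Real.exp (-γ * t) / γ) = -fun x => Real.exp (-γ * x) / γ := by
      funext s; simp [neg_div]
    rw [e1]
    refine h2'.congr_deriv ?_
    rw [mul_div_assoc, neg_div_self hγ.ne']
    ring
  have hint : IntegrableOn (fun t => Real.exp (-γ * t)) (Set.Ioi x) :=
    exp_neg_integrableOn_Ioi x hγ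
  have htend : Tendsto (fun t => -Real.exp (-γ * t) / γ) atTop (nhds 0) := by
    have h0 : Tendsto (fun t : ℝ => γ * t) atTop atTop := tendsto_id.const_mul_atTop hγ
    have h1 : Tendsto (fun t : ℝ => Real.exp (-(γ * t))) atTop (nhds 0) :=
      Real.tendsto_exp_neg_atTop_nhds_zero.comp h0
    have h2 : Tendsto (fun t : ℝ => Real.exp (-γ * t)) atTop (nhds 0) := by
      simpa [neg_mul] using h1
    simpa using (h2.neg.div_const γ)
  have := integral_Ioi_of_hasDerivAt_of_tendsto' hderiv hint htend
  rw [this]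
  field_simp
  ring

lemma abs_int_bound {γ : ℝ} (hγ : 0 < γ) {g : ℝ → ℝ}
    (gm : Measurable g) (gint : IntegrableOn (fun t => g t ^ 2 * Real.exp (γ * t)) (Set.Ioi 0))
    {s : Set ℝ} (hs : MeasurableSet s) (hsub : s ⊆ Set.Ioi 0) {a : ℝ} (ha : 0 < a) :
    IntegrableOn g s ∧
      ∫ t in s, |g t| ≤
        (a * (∫ t in Set.Ioi (0:ℝ), g t ^ 2 * Real.exp (γ * t))
          + a⁻¹ * (∫ t in s, Real.exp (-γ * t))) / 2 := by
  set φb : ℝ → ℝ := fun t => (a * (g t ^ 2 * Real.exp (γ * t)) + a⁻¹ * Real.exp (-γ * t)) / 2 with hφb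
  have hptw : ∀ t, |g t| ≤ φb t := by
    intro t
    have hc : 0 < a * Real.exp (γ * t) := mul_pos ha (Real.exp_pos _)
    have h := amgm_aux (g t) (a * Real.exp (γ * t)) hc
    have he : (a * Real.exp (γ * t))⁻¹ = a⁻¹ * Real.exp (-γ * t) := by
      rw [mul_inv, ← Real.exp_neg, ← neg_mul]
    rw [he] at h
    simp only [hφb]
    nlinarith [h]
  have hint1 : IntegrableOn (fun t => a * (g t ^ 2 * Real.exp (γ * t))) s :=
    (gint.mono_set hsub).const_mul a
  have hint2 : IntegrableOn (fun t => a⁻¹ * Real.exp (-γ * t)) s :=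
    ((exp_neg_integrableOn_Ioi 0 hγ).mono_set hsub).const_mul a⁻¹
  have hφb_int : IntegrableOn φb s := (hint1.add hint2).div_const 2
  have hg_int_s : IntegrableOn g s := by
    apply Integrable.mono' hφb_int (gm.aestronglyMeasurable.restrict)
    exact Filter.Eventually.of_forall fun t => by simpa [Real.norm_eq_abs] using hptw t
  refine ⟨hg_int_s, ?_⟩
  have h1 : ∫ t in s, |g t| ≤ ∫ t in s, φb t :=
    setIntegral_mono_on hg_int_s.abs hφb_int hs (fun t _ => hptw t)
  have h2 : ∫ t in s, φb t = (a * (∫ t in s, g t ^ 2 * Real.exp (γ * t))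
      + a⁻¹ * (∫ t in s, Real.exp (-γ * t))) / 2 := by
    simp only [hφb]
    rw [integral_div, integral_add hint1 hint2, MeasureTheory.integral_const_mul, MeasureTheory.integral_const_mul]
  have h3 : ∫ t in s, g t ^ 2 * Real.exp (γ * t)
      ≤ ∫ t in Set.Ioi (0:ℝ), g t ^ 2 * Real.exp (γ * t) := by
    apply setIntegral_mono_set gint
    · exact Filter.Eventually.of_forall fun t => mul_nonneg (sq_nonneg _) (Real.exp_pos _).le
    · exact HasSubset.Subset.eventuallyLE hsub
  calc ∫ t in s, |g t| ≤ _ := h1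
  _ = _ := h2
  _ ≤ _ := by gcongr

/-- Compactness of the embedding `H⁰_γ ⊂ L²_β` for `γ > β > 0`: every sequence `(h_j)` in
`H⁰_γ` bounded in the `H_γ`-norm admits a subsequence converging in
`L²([0,∞), e^{βx}dx)` to some `φ`. -/
theorem compact_embedding_H0gamma_L2beta
    (β γ M : ℝ) (hβ : 0 < β) (hβγ : β < γ) (hM : 0 < M)
    (h g : ℕ → ℝ → ℝ)
    (hg_meas : ∀ j, Measurable (g j))
    (hg_int : ∀ j, IntegrableOn (fun t => g j t ^ 2 * Real.exp (γ * t)) (Set.Ioi 0))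
    (hFTC : ∀ j, ∀ x ≥ (0 : ℝ), h j x = h j 0 + ∫ t in (0:ℝ)..x, g j t)
    (hlim : ∀ j, Tendsto (h j) atTop (nhds 0))
    (hbound : ∀ j,
      Real.sqrt (|h j 0| ^ 2 + ∫ t in Set.Ioi (0:ℝ), g j t ^ 2 * Real.exp (γ * t)) ≤ M) :
    ∃ k : ℕ → ℕ, StrictMono k ∧
      ∃ φ : ℝ → ℝ,
        IntegrableOn (fun x => φ x ^ 2 * Real.exp (β * x)) (Set.Ioi 0) ∧
        Tendsto (fun n => ∫ x in Set.Ioi (0:ℝ), (h (k n) x - φ x) ^ 2 * Real.exp (β * x))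
          atTop (nhds 0) := by
  have hγ : 0 < γ := hβ.trans hβγ
  set I : ℕ → ℝ := fun j => ∫ t in Set.Ioi (0:ℝ), g j t ^ 2 * Real.exp (γ * t) with hIdef
  -- the integral of g² e^{γt} is bounded by M²
  have hI_le : ∀ j, I j ≤ M ^ 2 := by
    intro j
    have h0 : 0 ≤ |h j 0| ^ 2 + I j :=
      add_nonneg (sq_nonneg _) (setIntegral_nonneg measurableSet_Ioi
        fun t _ => mul_nonneg (sq_nonneg _) (Real.exp_pos _).le)
    have hb := hbound j
    nlinarith [Real.sq_sqrt h0, Real.sqrt_nonneg (|h j 0| ^ 2 + I j), sq_nonneg (h j 0)]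
  -- g j is integrable on Ioi x for x ≥ 0
  have hgint_Ioi : ∀ j (x : ℝ), 0 ≤ x → IntegrableOn (g j) (Set.Ioi x) := fun j x hx =>
    (abs_int_bound hγ (hg_meas j) (hg_int j) measurableSet_Ioi (Set.Ioi_subset_Ioi hx) one_pos).1
  -- representation: h j x = -∫_{Ioi x} g j
  have hrep : ∀ j, ∀ x ≥ (0:ℝ), h j x = -∫ t in Set.Ioi x, g j t := by
    intro j x hx
    have hgi : IntegrableOn (g j) (Set.Ioi 0) := hgint_Ioi j 0 le_rfl
    have hgix : IntegrableOn (g j) (Set.Ioi x) := hgint_Ioi j x hx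
    have h1 : Tendsto (fun y => ∫ t in x..y, g j t) atTop
        (nhds (∫ t in Set.Ioi x, g j t)) :=
      intervalIntegral_tendsto_integral_Ioi x hgix tendsto_id
    have h2 : ∀ y, x ≤ y → h j y = h j x + ∫ t in x..y, g j t := by
      intro y hy
      have hii1 : IntervalIntegrable (g j) volume 0 x := by
        rw [intervalIntegrable_iff_integrableOn_Ioc_of_le hx]
        exact hgi.mono_set Set.Ioc_subset_Ioi_self
      have hii2 : IntervalIntegrable (g j) volume x y := by
        rw [intervalIntegrable_iff_integrableOn_Ioc_of_le hy]
        exact hgi.mono_set (fun t ht => lt_of_le_of_lt hx ht.1)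
      have e3 := intervalIntegral.integral_add_adjacent_intervals hii1 hii2
      rw [hFTC j y (hx.trans hy), hFTC j x hx, ← e3]
      ring
    have h3 : Tendsto (fun y => h j x + ∫ t in x..y, g j t) atTop (nhds 0) := by
      apply Tendsto.congr' _ (hlim j)
      filter_upwards [eventually_ge_atTop x] with y hy
      exact h2 y hy
    have h4 : Tendsto (fun y => h j x + ∫ t in x..y, g j t) atTop
        (nhds (h j x + ∫ t in Set.Ioi x, g j t)) := tendsto_const_nhds.add h1
    have h5 := tendsto_nhds_unique h3 h4
    linarith
  -- envelope
  set B : ℝ := (M ^ 2 + 1 / γ) / 2 with hBdef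
  have hBpos : 0 < B := by positivity
  have henv : ∀ j, ∀ x ≥ (0:ℝ), |h j x| ≤ B * Real.exp (-γ * x / 2) := by
    intro j x hx
    have hsub : Set.Ioi x ⊆ Set.Ioi 0 := Set.Ioi_subset_Ioi hx
    have ha : (0:ℝ) < Real.exp (-γ * x / 2) := Real.exp_pos _
    obtain ⟨hgi, hle⟩ := abs_int_bound hγ (hg_meas j) (hg_int j) measurableSet_Ioi hsub ha
    rw [hrep j x hx, abs_neg]
    have habs : |∫ t in Set.Ioi x, g j t| ≤ ∫ t in Set.Ioi x, |g j t| := by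
      simpa [Real.norm_eq_abs] using
        norm_integral_le_integral_norm (μ := volume.restrict (Set.Ioi x)) (g j)
    rw [exp_int_Ioi hγ x] at hle
    have hinv : (Real.exp (-γ * x / 2))⁻¹ = Real.exp (γ * x / 2) := by
      rw [← Real.exp_neg]; congr 1; ring
    rw [hinv] at hle
    have key : Real.exp (γ * x / 2) * (Real.exp (-γ * x) / γ)
        = Real.exp (-γ * x / 2) / γ := by
      rw [← mul_div_assoc, ← Real.exp_add]
      congr 2
      ring
    rw [key] at hle
    have hIb : Real.exp (-γ * x / 2) * I j ≤ Real.exp (-γ * x / 2) * M ^ 2 :=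
      mul_le_mul_of_nonneg_left (hI_le j) ha.le
    have hBalg : (Real.exp (-γ * x / 2) * M ^ 2 + Real.exp (-γ * x / 2) / γ) / 2
        = B * Real.exp (-γ * x / 2) := by
      rw [hBdef]; field_simp
    calc |∫ t in Set.Ioi x, g j t| ≤ ∫ t in Set.Ioi x, |g j t| := habs
      _ ≤ (Real.exp (-γ * x / 2) * I j + Real.exp (-γ * x / 2) / γ) / 2 := hle
      _ ≤ (Real.exp (-γ * x / 2) * M ^ 2 + Real.exp (-γ * x / 2) / γ) / 2 := by linarith
      _ = B * Real.exp (-γ * x / 2) := hBalg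
  -- difference bound (equicontinuity)
  have hdiff : ∀ j, ∀ x y a : ℝ, 0 ≤ x → x ≤ y → 0 < a →
      |h j y - h j x| ≤ (a * M ^ 2 + a⁻¹ * (y - x)) / 2 := by
    intro j x y a hx hxy ha
    have hsub : Set.Ioc x y ⊆ Set.Ioi 0 := fun t ht => lt_of_le_of_lt hx ht.1
    obtain ⟨hgiIoc, hle⟩ := abs_int_bound hγ (hg_meas j) (hg_int j) measurableSet_Ioc hsub ha
    have hgiy : IntegrableOn (g j) (Set.Ioi y) := hgint_Ioi j y (hx.trans hxy)
    have hsplit : (∫ t in Set.Ioi x, g j t)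
        = (∫ t in Set.Ioc x y, g j t) + ∫ t in Set.Ioi y, g j t := by
      rw [← setIntegral_union (Set.Ioc_disjoint_Ioi le_rfl) measurableSet_Ioi hgiIoc hgiy,
        Set.Ioc_union_Ioi_eq_Ioi hxy]
    have heq : h j y - h j x = ∫ t in Set.Ioc x y, g j t := by
      rw [hrep j y (hx.trans hxy), hrep j x hx, hsplit]; ring
    rw [heq]
    have habs : |∫ t in Set.Ioc x y, g j t| ≤ ∫ t in Set.Ioc x y, |g j t| := by
      simpa [Real.norm_eq_abs] using
        norm_integral_le_integral_norm (μ := volume.restrict (Set.Ioc x y)) (g j)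
    have hE : ∫ t in Set.Ioc x y, Real.exp (-γ * t) ≤ y - x := by
      have h1 : ∫ t in Set.Ioc x y, Real.exp (-γ * t) ≤ ∫ t in Set.Ioc x y, (1:ℝ) := by
        apply setIntegral_mono_on ((exp_neg_integrableOn_Ioi 0 hγ).mono_set hsub)
          (integrableOn_const measure_Ioc_lt_top.ne) measurableSet_Ioc
        intro t ht
        have ht0 : 0 ≤ t := (lt_of_le_of_lt hx ht.1).le
        calc Real.exp (-γ * t) ≤ Real.exp 0 := Real.exp_le_exp.mpr (by nlinarith)
          _ = 1 := Real.exp_zero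
      rw [setIntegral_const, smul_eq_mul, mul_one, Real.volume_real_Ioc_of_le hxy] at h1
      exact h1
    have hIb : a * I j ≤ a * M ^ 2 := mul_le_mul_of_nonneg_left (hI_le j) ha.le
    have hEb : a⁻¹ * (∫ t in Set.Ioc x y, Real.exp (-γ * t)) ≤ a⁻¹ * (y - x) :=
      mul_le_mul_of_nonneg_left hE (inv_nonneg.mpr ha.le)
    calc |∫ t in Set.Ioc x y, g j t| ≤ ∫ t in Set.Ioc x y, |g j t| := habs
      _ ≤ (a * I j + a⁻¹ * (∫ t in Set.Ioc x y, Real.exp (-γ * t))) / 2 := hle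
      _ ≤ (a * M ^ 2 + a⁻¹ * (y - x)) / 2 := by linarith
  -- extraction of a pointwise (on rationals) convergent subsequence
  set F : ℕ → ℚ → ℝ := fun j q => h j (max (q:ℝ) 0) with hFdef
  have hFmem : ∀ j, F j ∈ Set.pi Set.univ (fun _ : ℚ => Set.Icc (-B) B) := by
    intro j q _
    have hx : (0:ℝ) ≤ max (q:ℝ) 0 := le_max_right _ _
    have he := henv j _ hx
    have hexp1 : Real.exp (-γ * max (q:ℝ) 0 / 2) ≤ 1 := by
      rw [Real.exp_le_one_iff]
      have : 0 ≤ γ * max (q:ℝ) 0 := mul_nonneg hγ.le hx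
      linarith
    have habs : |h j (max (q:ℝ) 0)| ≤ B := by nlinarith
    exact Set.mem_Icc.mpr (abs_le.mp habs)
  have hcomp : IsCompact (Set.pi Set.univ (fun _ : ℚ => Set.Icc (-B) B)) :=
    isCompact_univ_pi fun _ => isCompact_Icc
  obtain ⟨aℓ, -, k, hk, hconv⟩ := hcomp.tendsto_subseq hFmem
  have hconvq : ∀ q : ℚ, Tendsto (fun n => h (k n) (max (q:ℝ) 0)) atTop (nhds (aℓ q)) := by
    intro q
    exact tendsto_pi_nhds.mp hconv q
  -- Cauchy at every real point, define φ
  have hcauchy : ∀ x : ℝ, ∃ c : ℝ, Tendsto (fun n => h (k n) (max x 0)) atTop (nhds c) := by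
    intro x
    apply cauchySeq_tendsto_of_complete
    rw [Metric.cauchySeq_iff]
    intro ε hε
    set x' := max x 0 with hx'def
    have hx'0 : 0 ≤ x' := le_max_right _ _
    set a := ε / (3 * (M ^ 2 + 1)) with hadef
    have ha : 0 < a := by positivity
    set δ := a * ε / 3 with hδdef
    have hδ : 0 < δ := by positivity
    obtain ⟨q, hq1, hq2⟩ := exists_rat_btwn (lt_add_of_pos_right x' hδ)
    have hq0 : max (q:ℝ) 0 = (q:ℝ) := max_eq_left (hx'0.trans hq1.le)
    have hclose : ∀ j, |h j (q:ℝ) - h j x'| ≤ ε / 3 := by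
      intro j
      have hd := hdiff j x' (q:ℝ) a hx'0 hq1.le ha
      have h1 : a * M ^ 2 ≤ ε / 3 := by
        rw [hadef, div_mul_eq_mul_div, div_le_div_iff₀ (by positivity) (by positivity)]
        nlinarith
      have h2 : a⁻¹ * ((q:ℝ) - x') ≤ ε / 3 := by
        have hmle : a⁻¹ * ((q:ℝ) - x') ≤ a⁻¹ * δ :=
          mul_le_mul_of_nonneg_left (by linarith) (inv_nonneg.mpr ha.le)
        have heqa : a⁻¹ * δ = ε / 3 := by
          rw [hδdef]; field_simp
        linarith
      linarith
    have hmid : CauchySeq (fun n => h (k n) (max (q:ℝ) 0)) := (hconvq q).cauchySeq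
    rw [Metric.cauchySeq_iff] at hmid
    obtain ⟨N, hN⟩ := hmid (ε / 4) (by positivity)
    refine ⟨N, fun m hm n hn => ?_⟩
    have hmn := hN m hm n hn
    rw [hq0, Real.dist_eq] at hmn
    rw [Real.dist_eq]
    have e1 := hclose (k m)
    have e2 := hclose (k n)
    calc |h (k m) x' - h (k n) x'|
        ≤ |h (k m) x' - h (k m) (q:ℝ)| + |h (k m) (q:ℝ) - h (k n) x'| := abs_sub_le _ _ _
      _ ≤ |h (k m) x' - h (k m) (q:ℝ)| + (|h (k m) (q:ℝ) - h (k n) (q:ℝ)|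
          + |h (k n) (q:ℝ) - h (k n) x'|) := by
          have := abs_sub_le (h (k m) (q:ℝ)) (h (k n) (q:ℝ)) (h (k n) x')
          linarith
      _ < ε := by
          rw [abs_sub_comm (h (k m) x')] at *
          linarith [abs_sub_comm (h (k m) (q:ℝ)) (h (k m) x')]
  choose φ hφ using hcauchy
  -- continuity of the truncated h j
  have hcont : ∀ j, Continuous (fun x : ℝ => h j (max x 0)) := by
    intro j
    have hgi : IntegrableOn (g j) (Set.Ioi 0) := hgint_Ioi j 0 le_rfl
    set G : ℝ → ℝ := Set.indicator (Set.Ioi 0) (g j) with hGdef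
    have hGint : Integrable G := by
      rw [hGdef, integrable_indicator_iff measurableSet_Ioi]
      exact hgi
    have hprim : Continuous (fun x : ℝ => ∫ t in (0:ℝ)..x, G t) :=
      intervalIntegral.continuous_primitive (fun a b => hGint.intervalIntegrable) 0
    have heqf : (fun x : ℝ => h j (max x 0))
        = fun x => h j 0 + ∫ t in (0:ℝ)..(max x 0), G t := by
      funext x
      have hx : (0:ℝ) ≤ max x 0 := le_max_right _ _
      rw [hFTC j _ hx]
      congr 1
      rw [intervalIntegral.integral_of_le hx, intervalIntegral.integral_of_le hx]
      apply setIntegral_congr_fun measurableSet_Ioc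
      intro t ht
      rw [hGdef]
      exact (Set.indicator_of_mem (ht.1 : t ∈ Set.Ioi 0) _).symm
    rw [heqf]
    exact continuous_const.add (hprim.comp (continuous_id.max continuous_const))
  have hφmeas : Measurable φ := by
    apply measurable_of_tendsto_metrizable (fun n => (hcont (k n)).measurable)
    rw [tendsto_pi_nhds]
    exact hφ
  -- envelope for φ
  have hφenv : ∀ x : ℝ, 0 < x → |φ x| ≤ B * Real.exp (-γ * x / 2) := by
    intro x hx
    have hmax : max x 0 = x := max_eq_left hx.le
    apply le_of_tendsto (hφ x).abs
    filter_upwards with n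
    rw [hmax]
    exact henv (k n) x hx.le
  -- the dominating function
  have hexpeq : ∀ x : ℝ, Real.exp (-γ * x / 2) ^ 2 * Real.exp (β * x)
      = Real.exp (-(γ - β) * x) := by
    intro x
    rw [pow_two, ← Real.exp_add, ← Real.exp_add]
    congr 1
    ring
  have hbd_int : IntegrableOn (fun x => 4 * B ^ 2 * Real.exp (-(γ - β) * x)) (Set.Ioi 0) :=
    (exp_neg_integrableOn_Ioi 0 (by linarith)).const_mul _
  have hptbound : ∀ n (x : ℝ), 0 < x →
      (h (k n) x - φ x) ^ 2 * Real.exp (β * x) ≤ 4 * B ^ 2 * Real.exp (-(γ - β) * x) := by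
    intro n x hx
    have h1 := henv (k n) x hx.le
    have h2 := hφenv x hx
    have h3 : |h (k n) x - φ x| ≤ 2 * B * Real.exp (-γ * x / 2) := by
      calc |h (k n) x - φ x| ≤ |h (k n) x| + |φ x| := abs_sub _ _
        _ ≤ 2 * B * Real.exp (-γ * x / 2) := by linarith
    have h4 : (h (k n) x - φ x) ^ 2 ≤ (2 * B * Real.exp (-γ * x / 2)) ^ 2 := by
      rw [← sq_abs]
      exact pow_le_pow_left₀ (abs_nonneg _) h3 2
    calc (h (k n) x - φ x) ^ 2 * Real.exp (β * x)
        ≤ (2 * B * Real.exp (-γ * x / 2)) ^ 2 * Real.exp (β * x) :=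
          mul_le_mul_of_nonneg_right h4 (Real.exp_pos _).le
      _ = 4 * B ^ 2 * Real.exp (-(γ - β) * x) := by
          rw [mul_pow, mul_assoc, hexpeq x]; ring
  -- integrability of φ² e^{βx}
  have hφint : IntegrableOn (fun x => φ x ^ 2 * Real.exp (β * x)) (Set.Ioi 0) := by
    apply Integrable.mono' hbd_int
    · exact (((hφmeas.pow_const 2).mul
        (Real.measurable_exp.comp (measurable_const.mul measurable_id))).aestronglyMeasurable).restrict
    · filter_upwards [ae_restrict_mem measurableSet_Ioi] with x hx
      have h2 := hφenv x hx
      rw [Real.norm_eq_abs, abs_of_nonneg (by positivity)]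
      have h4 : φ x ^ 2 ≤ (B * Real.exp (-γ * x / 2)) ^ 2 := by
        rw [← sq_abs]
        exact pow_le_pow_left₀ (abs_nonneg _) h2 2
      have h5 : (B * Real.exp (-γ * x / 2)) ^ 2 * Real.exp (β * x)
          = B ^ 2 * Real.exp (-(γ - β) * x) := by
        rw [mul_pow, mul_assoc, hexpeq x]
      nlinarith [Real.exp_pos (β * x), Real.exp_pos (-(γ - β) * x), sq_nonneg B,
        mul_le_mul_of_nonneg_right h4 (Real.exp_pos (β * x)).le]
  -- measurability of the integrands
  have hFnmeas : ∀ n : ℕ, AEStronglyMeasurable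
      (fun x => (h (k n) x - φ x) ^ 2 * Real.exp (β * x))
      (volume.restrict (Set.Ioi (0:ℝ))) := by
    intro n
    have hm : Measurable (fun x => (h (k n) (max x 0) - φ x) ^ 2 * Real.exp (β * x)) :=
      (((hcont (k n)).measurable.sub hφmeas).pow_const 2).mul
        (Real.measurable_exp.comp (measurable_const.mul measurable_id))
    apply (hm.aestronglyMeasurable.restrict).congr
    filter_upwards [ae_restrict_mem measurableSet_Ioi] with x hx
    rw [max_eq_left (le_of_lt hx)]
  -- dominated convergence
  have hbound_ae : ∀ n : ℕ, ∀ᵐ x ∂(volume.restrict (Set.Ioi (0:ℝ))),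
      ‖(h (k n) x - φ x) ^ 2 * Real.exp (β * x)‖
        ≤ 4 * B ^ 2 * Real.exp (-(γ - β) * x) := by
    intro n
    filter_upwards [ae_restrict_mem measurableSet_Ioi] with x hx
    rw [Real.norm_eq_abs, abs_of_nonneg (by positivity)]
    exact hptbound n x hx
  have hlim0 : ∀ᵐ x ∂(volume.restrict (Set.Ioi (0:ℝ))),
      Tendsto (fun n => (h (k n) x - φ x) ^ 2 * Real.exp (β * x)) atTop
        (nhds ((fun _ : ℝ => (0:ℝ)) x)) := by
    filter_upwards [ae_restrict_mem measurableSet_Ioi] with x hx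
    have hφx := hφ x
    rw [max_eq_left (le_of_lt hx)] at hφx
    have ht : Tendsto (fun n => (h (k n) x - φ x) ^ 2 * Real.exp (β * x)) atTop
        (nhds ((φ x - φ x) ^ 2 * Real.exp (β * x))) :=
      ((hφx.sub tendsto_const_nhds).pow 2).mul tendsto_const_nhds
    simpa using ht
  have hfinal := tendsto_integral_of_dominated_convergence _ hFnmeas hbd_int hbound_ae hlim0
  refine ⟨k, hk, φ, hφint, ?_⟩
  simpa using hfinal
end

section
/- Let γ > β > 0, let M > 0, and let (h_j)_{j∈ℕ} be a sequence of functions, each lying in H_γ with weak derivative g_j, such that ‖h_j‖_γ ≤ M for all j. Write c_j := h_j(∞) = lim_{x→∞} h_j(x) (which exists). Then there exist a subsequence (h_{j_k}), a real number c, and a function φ ∈ L²([0,∞), e^{βx} dx) such that c_{j_k} → c and ∫₀^∞ |(h_{j_k}(x) − c_{j_k}) − φ(x)|² e^{βx} dx → 0 as k → ∞. In other words, the embedding h ↦ (h − h(∞), h(∞)) of H_γ into L²_β ⊕ ℝ is compact. -/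
open MeasureTheory Real Filter Set

lemma aux_integral_exp_Ioi (γ a : ℝ) (hγ : 0 < γ) :
    ∫ t in Set.Ioi a, Real.exp (-(γ * t)) = Real.exp (-(γ * a)) / γ := by
  have hd : ∀ x ∈ Set.Ioi a, HasDerivAt (fun t => -Real.exp (-(γ * t)) / γ)
      (Real.exp (-(γ * x))) x := by
    intro x _
    have h1 : HasDerivAt (fun t : ℝ => -(γ * t)) (-γ) x := by
      simpa using (hasDerivAt_id x).const_mul (-γ)
    have h2 := h1.exp.neg.div_const γ
    convert h2 using 1
    · rfl
    · rfl
    · rfl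
    · rw [mul_neg, neg_neg, mul_div_assoc, div_self hγ.ne', mul_one]
  have hcont : ContinuousWithinAt (fun t => -Real.exp (-(γ * t)) / γ) (Set.Ici a) a :=
    (Continuous.continuousWithinAt (by continuity))
  have hint : IntegrableOn (fun t => Real.exp (-(γ * t))) (Set.Ioi a) := by
    simpa [neg_mul] using exp_neg_integrableOn_Ioi a hγ
  have htend : Tendsto (fun t => -Real.exp (-(γ * t)) / γ) atTop (nhds 0) := by
    have h0 : Tendsto (fun t : ℝ => -(γ * t)) atTop atBot :=
      tendsto_neg_atBot_iff.mpr (Tendsto.const_mul_atTop hγ tendsto_id)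
    have := ((Real.tendsto_exp_atBot.comp h0).neg).div_const γ
    simpa using this
  have := MeasureTheory.integral_Ioi_of_hasDerivAt_of_tendsto hcont hd hint htend
  rw [this]; ring

lemma aux_amgm (γ ε t v : ℝ) (hε : 0 < ε) :
    |v| ≤ (ε * (v ^ 2 * Real.exp (γ * t)) + Real.exp (-(γ * t)) / ε) / 2 := by
  set a : ℝ := |v| * Real.exp (γ * t / 2) with ha
  set b : ℝ := Real.exp (-(γ * t) / 2) with hb
  have hab : |v| = a * b := by
    rw [ha, hb, mul_assoc, ← Real.exp_add]
    simp [add_neg_cancel, show γ * t / 2 + -(γ * t) / 2 = 0 by ring]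
  have ha2 : a ^ 2 = v ^ 2 * Real.exp (γ * t) := by
    rw [ha, mul_pow, sq_abs,
      show Real.exp (γ * t / 2) ^ 2 = Real.exp (γ * t) by rw [sq, ← Real.exp_add]; ring_nf]
  have hb2 : b ^ 2 = Real.exp (-(γ * t)) := by
    rw [hb, sq, ← Real.exp_add]; ring_nf
  have key : |v| ≤ (ε ^ 2 * (v ^ 2 * Real.exp (γ * t)) + Real.exp (-(γ * t))) / (2 * ε) := by
    rw [le_div_iff₀ (by positivity), hab, ← ha2, ← hb2]
    nlinarith [sq_nonneg (ε * a - b)]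
  have heq : (ε ^ 2 * (v ^ 2 * Real.exp (γ * t)) + Real.exp (-(γ * t))) / (2 * ε)
      = (ε * (v ^ 2 * Real.exp (γ * t)) + Real.exp (-(γ * t)) / ε) / 2 := by
    field_simp
  linarith [heq ▸ key]

/-- Compactness of the embedding `H_γ ⊂ L²_β ⊕ ℝ`, `h ↦ (h - h(∞), h(∞))`, for
`γ > β > 0`: every sequence `(h_j)` in `H_γ` bounded in the `H_γ`-norm, with
`c_j = h_j(∞)`, admits a subsequence along which `c_{j_k} → c` and
`h_{j_k} - c_{j_k} → φ` in `L²([0,∞), e^{βx}dx)`. -/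
theorem compact_embedding_Hgamma_L2beta_oplus_R
    (β γ M : ℝ) (hβ : 0 < β) (hβγ : β < γ) (hM : 0 < M)
    (h g : ℕ → ℝ → ℝ) (c : ℕ → ℝ)
    (hg_meas : ∀ j, Measurable (g j))
    (hg_int : ∀ j, IntegrableOn (fun t => g j t ^ 2 * Real.exp (γ * t)) (Set.Ioi 0))
    (hFTC : ∀ j, ∀ x ≥ (0 : ℝ), h j x = h j 0 + ∫ t in (0:ℝ)..x, g j t)
    (hlim : ∀ j, Tendsto (h j) atTop (nhds (c j)))
    (hbound : ∀ j,
      Real.sqrt (|h j 0| ^ 2 + ∫ t in Set.Ioi (0:ℝ), g j t ^ 2 * Real.exp (γ * t)) ≤ M) :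
    ∃ k : ℕ → ℕ, StrictMono k ∧
      ∃ cLim : ℝ, ∃ φ : ℝ → ℝ,
        IntegrableOn (fun x => φ x ^ 2 * Real.exp (β * x)) (Set.Ioi 0) ∧
        Tendsto (fun n => c (k n)) atTop (nhds cLim) ∧
        Tendsto
          (fun n => ∫ x in Set.Ioi (0:ℝ), ((h (k n) x - c (k n)) - φ x) ^ 2 * Real.exp (β * x))
          atTop (nhds 0) := by
  have hγ : 0 < γ := hβ.trans hβγ
  set C : ℝ := (M ^ 2 + 1 / γ) / 2 with hC
  have hC0 : 0 < C := by positivity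
  -- bounds from the norm hypothesis
  have hInn : ∀ j, 0 ≤ ∫ t in Set.Ioi (0:ℝ), g j t ^ 2 * Real.exp (γ * t) := fun j =>
    setIntegral_nonneg measurableSet_Ioi fun t _ => by positivity
  have hb2 : ∀ j, |h j 0| ^ 2 + (∫ t in Set.Ioi (0:ℝ), g j t ^ 2 * Real.exp (γ * t)) ≤ M ^ 2 := by
    intro j
    have h1 := hbound j
    have h2 : (0:ℝ) ≤ |h j 0| ^ 2 + ∫ t in Set.Ioi (0:ℝ), g j t ^ 2 * Real.exp (γ * t) := by
      have := hInn j; positivity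
    nlinarith [Real.sq_sqrt h2, Real.sqrt_nonneg
      (|h j 0| ^ 2 + ∫ t in Set.Ioi (0:ℝ), g j t ^ 2 * Real.exp (γ * t))]
  have hIle : ∀ j, (∫ t in Set.Ioi (0:ℝ), g j t ^ 2 * Real.exp (γ * t)) ≤ M ^ 2 := by
    intro j; have := hb2 j; nlinarith [sq_nonneg (|h j 0|)]
  have hh0 : ∀ j, |h j 0| ≤ M := by
    intro j; have := hb2 j; have h2 := hInn j
    nlinarith [abs_nonneg (h j 0)]
  -- integrability of exp (-(γ t)) on tails
  have hexpint : ∀ a : ℝ, IntegrableOn (fun t => Real.exp (-(γ * t))) (Set.Ioi a) := by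
    intro a; simpa [neg_mul] using exp_neg_integrableOn_Ioi a hγ
  -- integrability of g on (0, ∞)
  have hgInt : ∀ j, IntegrableOn (g j) (Set.Ioi 0) := by
    intro j
    refine Integrable.mono'
      (g := fun t => ((1:ℝ) * (g j t ^ 2 * Real.exp (γ * t)) + Real.exp (-(γ * t)) / 1) / 2)
      ?_ (hg_meas j).aestronglyMeasurable ?_
    · exact (((hg_int j).const_mul 1).add ((hexpint 0).div_const 1)).div_const 2
    · exact Filter.Eventually.of_forall fun t => by
        simpa using aux_amgm γ 1 t (g j t) one_pos
  -- the master integral estimate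
  have hest : ∀ j (ε : ℝ), 0 < ε → ∀ S : Set ℝ, MeasurableSet S → S ⊆ Set.Ioi 0 →
      |∫ t in S, g j t| ≤ (ε * M ^ 2 + (∫ t in S, Real.exp (-(γ * t))) / ε) / 2 := by
    intro j ε hε S hS hsub
    have hgS : IntegrableOn (g j) S := (hgInt j).mono_set hsub
    have hXS : IntegrableOn (fun t => g j t ^ 2 * Real.exp (γ * t)) S :=
      (hg_int j).mono_set hsub
    have hES : IntegrableOn (fun t => Real.exp (-(γ * t))) S := (hexpint 0).mono_set hsub
    have h1 : |∫ t in S, g j t| ≤ ∫ t in S, |g j t| := by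
      simpa [Real.norm_eq_abs] using norm_integral_le_integral_norm (μ := volume.restrict S) (g j)
    have h2 : (∫ t in S, |g j t|) ≤
        ∫ t in S, (ε * (g j t ^ 2 * Real.exp (γ * t)) + Real.exp (-(γ * t)) / ε) / 2 := by
      refine setIntegral_mono_on hgS.abs ?_ hS fun t _ => aux_amgm γ ε t (g j t) hε
      exact ((hXS.const_mul ε).add (hES.div_const ε)).div_const 2
    have h3 : (∫ t in S, (ε * (g j t ^ 2 * Real.exp (γ * t)) + Real.exp (-(γ * t)) / ε) / 2)
        = (ε * (∫ t in S, g j t ^ 2 * Real.exp (γ * t))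
            + (∫ t in S, Real.exp (-(γ * t))) / ε) / 2 := by
      rw [integral_div, integral_add (hXS.const_mul ε) (hES.div_const ε),
        MeasureTheory.integral_const_mul, integral_div]
    have h4 : (∫ t in S, g j t ^ 2 * Real.exp (γ * t)) ≤ M ^ 2 := by
      refine le_trans ?_ (hIle j)
      refine setIntegral_mono_set (hg_int j) ?_ (HasSubset.Subset.eventuallyLE hsub)
      exact Filter.Eventually.of_forall fun t => by positivity
    calc |∫ t in S, g j t| ≤ _ := h1.trans (h2.trans_eq h3)
      _ ≤ (ε * M ^ 2 + (∫ t in S, Real.exp (-(γ * t))) / ε) / 2 := by gcongr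
  -- tail estimate
  have htail : ∀ j x, 0 ≤ x → |∫ t in Set.Ioi x, g j t| ≤ C * Real.exp (-(γ / 2) * x) := by
    intro j x hx
    have hεp : 0 < Real.exp (-(γ / 2) * x) := Real.exp_pos _
    have h1 := hest j _ hεp (Set.Ioi x) measurableSet_Ioi (Set.Ioi_subset_Ioi hx)
    rw [aux_integral_exp_Ioi γ x hγ] at h1
    refine h1.trans (le_of_eq ?_)
    rw [hC, show Real.exp (-(γ * x)) = Real.exp (-(γ / 2) * x) * Real.exp (-(γ / 2) * x) by
      rw [← Real.exp_add]; ring_nf]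
    field_simp
  -- Hölder-type modulus of continuity
  have hholder : ∀ j x y, 0 ≤ y → y < x → |h j x - h j y| ≤ M * Real.sqrt (x - y) := by
    intro j x y hy hyx
    have hx : (0:ℝ) ≤ x := hy.trans hyx.le
    have hdiffeq : h j x - h j y = ∫ t in Set.Ioc y x, g j t := by
      rw [hFTC j x hx, hFTC j y hy, intervalIntegral.integral_of_le hx,
        intervalIntegral.integral_of_le hy]
      have hsplit : (∫ t in Set.Ioc 0 y, g j t) + ∫ t in Set.Ioc y x, g j t
          = ∫ t in Set.Ioc 0 x, g j t := by
        rw [← MeasureTheory.setIntegral_union (Set.Ioc_disjoint_Ioc_of_le le_rfl)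
          measurableSet_Ioc ((hgInt j).mono_set Set.Ioc_subset_Ioi_self)
          ((hgInt j).mono_set (fun t ht => lt_of_le_of_lt hy ht.1)),
          Set.Ioc_union_Ioc_eq_Ioc hy hyx.le]
      linarith
    rw [hdiffeq]
    set s : ℝ := Real.sqrt (x - y) with hs
    have hs0 : 0 < s := Real.sqrt_pos.2 (by linarith)
    have hs2 : s ^ 2 = x - y := Real.sq_sqrt (by linarith)
    have hεp : 0 < s / M := by positivity
    have h1 := hest j _ hεp (Set.Ioc y x) measurableSet_Ioc (fun t ht => lt_of_le_of_lt hy ht.1)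
    have h2 : (∫ t in Set.Ioc y x, Real.exp (-(γ * t))) ≤ x - y := by
      have h3 : (∫ t in Set.Ioc y x, Real.exp (-(γ * t))) ≤ ∫ t in Set.Ioc y x, (1:ℝ) := by
        refine setIntegral_mono_on ((hexpint 0).mono_set (fun t ht => lt_of_le_of_lt hy ht.1))
          (integrableOn_const (by rw [Real.volume_Ioc]; exact ENNReal.ofReal_ne_top))
          measurableSet_Ioc fun t ht => ?_
        exact Real.exp_le_one_iff.2 (by nlinarith [lt_of_le_of_lt hy ht.1])
      rw [setIntegral_const, Real.volume_real_Ioc_of_le hyx.le, smul_eq_mul, mul_one] at h3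
      exact h3
    have h4 : (s / M * M ^ 2 + (∫ t in Set.Ioc y x, Real.exp (-(γ * t))) / (s / M)) / 2
        ≤ (s / M * M ^ 2 + (x - y) / (s / M)) / 2 := by
      gcongr
    have h5 : (s / M * M ^ 2 + (x - y) / (s / M)) / 2 = M * s := by
      rw [← hs2]
      field_simp
      ring
    calc |∫ t in Set.Ioc y x, g j t| ≤ _ := h1
      _ ≤ _ := h4
      _ = M * s := h5
  -- identification of the limit c j
  have hc : ∀ j, c j = h j 0 + ∫ t in Set.Ioi (0:ℝ), g j t := by
    intro j
    have h1 : Tendsto (fun x : ℝ => h j 0 + ∫ t in (0:ℝ)..x, g j t) atTop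
        (nhds (h j 0 + ∫ t in Set.Ioi (0:ℝ), g j t)) :=
      tendsto_const_nhds.add
        (MeasureTheory.intervalIntegral_tendsto_integral_Ioi 0 (hgInt j) tendsto_id)
    have h2 : Tendsto (h j) atTop (nhds (h j 0 + ∫ t in Set.Ioi (0:ℝ), g j t)) := by
      refine h1.congr' ?_
      filter_upwards [eventually_ge_atTop (0:ℝ)] with x hx
      exact (hFTC j x hx).symm
    exact tendsto_nhds_unique (hlim j) h2
  -- the difference to the limit is a tail integral
  have hdiff : ∀ j x, 0 ≤ x → h j x - c j = -∫ t in Set.Ioi x, g j t := by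
    intro j x hx
    have hsplit : (∫ t in Set.Ioc 0 x, g j t) + ∫ t in Set.Ioi x, g j t
        = ∫ t in Set.Ioi (0:ℝ), g j t := by
      rw [← MeasureTheory.setIntegral_union (Set.Ioc_disjoint_Ioi le_rfl)
        measurableSet_Ioi ((hgInt j).mono_set Set.Ioc_subset_Ioi_self)
        ((hgInt j).mono_set (Set.Ioi_subset_Ioi hx)), Set.Ioc_union_Ioi_eq_Ioi hx]
    rw [hFTC j x hx, hc j, intervalIntegral.integral_of_le hx]
    linarith
  have hdecay : ∀ j x, 0 ≤ x → |h j x - c j| ≤ C * Real.exp (-(γ / 2) * x) := by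
    intro j x hx
    rw [hdiff j x hx, abs_neg]
    exact htail j x hx
  -- uniform bounds
  set B : ℝ := M + 2 * C with hB
  have hcB : ∀ j, |c j| ≤ M + C := by
    intro j
    have h1 := hdecay j 0 le_rfl
    rw [mul_zero, Real.exp_zero, mul_one] at h1
    have h2 := hh0 j
    have h3 : |c j - h j 0| = |h j 0 - c j| := abs_sub_comm _ _
    have h4 := abs_sub_abs_le_abs_sub (c j) (h j 0)
    linarith
  have hhB : ∀ j x, 0 ≤ x → |h j x| ≤ B := by
    intro j x hx
    have h1 := hdecay j x hx
    have h2 : Real.exp (-(γ / 2) * x) ≤ 1 := Real.exp_le_one_iff.2 (by nlinarith)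
    have h3 : C * Real.exp (-(γ / 2) * x) ≤ C := by nlinarith
    have h4 := abs_sub_abs_le_abs_sub (h j x) (c j)
    have h5 := hcB j
    rw [hB]
    linarith
  -- extract a subsequence converging at all rational points and in the constant
  set u : ℕ → ℝ × (ℚ → ℝ) := fun j => (c j, fun q => h j (max (q : ℝ) 0)) with hu
  have hBpos : 0 < B := by rw [hB]; positivity
  have hscompact : IsCompact ((Set.Icc (-B) B) ×ˢ (Set.univ.pi fun _ : ℚ => Set.Icc (-B) B)) :=
    isCompact_Icc.prod (isCompact_univ_pi fun _ => isCompact_Icc)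
  have hmem : ∀ j, u j ∈ (Set.Icc (-B) B) ×ˢ (Set.univ.pi fun _ : ℚ => Set.Icc (-B) B) := by
    intro j
    constructor
    · have := hcB j
      have : |c j| ≤ B := by rw [hB]; linarith
      exact abs_le.1 this
    · intro q _
      exact abs_le.1 (hhB j (max (q : ℝ) 0) (le_max_right _ _))
  obtain ⟨L, -, k, hk, hconv⟩ := hscompact.isSeqCompact hmem
  have hcconv : Tendsto (fun n => c (k n)) atTop (nhds L.1) := by
    have := ((continuous_fst.tendsto L).comp hconv)
    simpa [hu, Function.comp_def] using this
  have hqconv : ∀ q : ℚ, Tendsto (fun n => h (k n) (max (q : ℝ) 0)) atTop (nhds (L.2 q)) := by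
    intro q
    have := (((continuous_apply q).comp continuous_snd).tendsto L).comp hconv
    simpa [hu, Function.comp_def] using this
  -- pointwise convergence on [0, ∞)
  have hptlim : ∀ x : ℝ, 0 ≤ x → ∃ l, Tendsto (fun n => h (k n) x) atTop (nhds l) := by
    intro x hx
    apply cauchySeq_tendsto_of_complete
    rw [Metric.cauchySeq_iff]
    intro ε hε
    set δ : ℝ := (ε / (4 * M)) ^ 2 with hδ
    have hδ0 : 0 < δ := by positivity
    obtain ⟨q, hq1, hq2⟩ := exists_rat_btwn (lt_add_of_pos_right x hδ0)
    have hq0 : (0 : ℝ) ≤ (q : ℝ) := le_trans hx hq1.le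
    have hqc : Tendsto (fun n => h (k n) (q : ℝ)) atTop (nhds (L.2 q)) := by
      have := hqconv q
      rwa [max_eq_left hq0] at this
    obtain ⟨N, hN⟩ := Metric.cauchySeq_iff.1 hqc.cauchySeq (ε / 4) (by positivity)
    refine ⟨N, fun m hm n hn => ?_⟩
    have hhold : ∀ i, |h i (q : ℝ) - h i x| ≤ ε / 4 := by
      intro i
      have h1 := hholder i (q : ℝ) x hx hq1
      have h2 : Real.sqrt ((q : ℝ) - x) ≤ ε / (4 * M) := by
        rw [show ε / (4 * M) = Real.sqrt δ by
          rw [hδ, Real.sqrt_sq (by positivity)]]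
        exact Real.sqrt_le_sqrt (by linarith)
      calc |h i (q : ℝ) - h i x| ≤ M * Real.sqrt ((q : ℝ) - x) := h1
        _ ≤ M * (ε / (4 * M)) := by nlinarith [Real.sqrt_nonneg ((q : ℝ) - x)]
        _ = ε / 4 := by field_simp
    have hq3 := hN m hm n hn
    rw [Real.dist_eq] at hq3 ⊢
    have e1 := hhold (k m)
    have e2 := hhold (k n)
    have : h (k m) x - h (k n) x
        = (h (k m) x - h (k m) (q:ℝ)) + (h (k m) (q:ℝ) - h (k n) (q:ℝ))
          + (h (k n) (q:ℝ) - h (k n) x) := by ring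
    rw [this]
    calc |_| ≤ |h (k m) x - h (k m) (q:ℝ)| + |h (k m) (q:ℝ) - h (k n) (q:ℝ)|
        + |h (k n) (q:ℝ) - h (k n) x| := abs_add_three _ _ _
      _ < ε := by
          rw [abs_sub_comm (h (k m) x)] at *
          linarith [abs_sub_comm (h (k n) (q:ℝ)) (h (k n) x)]
  -- the pointwise limit function
  set ψ : ℝ → ℝ := fun x => limUnder atTop (fun n => h (k n) x) with hψdef
  have hψ : ∀ x : ℝ, 0 ≤ x → Tendsto (fun n => h (k n) x) atTop (nhds (ψ x)) := by
    intro x hx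
    obtain ⟨l, hl⟩ := hptlim x hx
    have : ψ x = l := hl.limUnder_eq
    rwa [this]
  set φ : ℝ → ℝ := fun x => ψ x - L.1 with hφdef
  have hφlim : ∀ x : ℝ, 0 ≤ x → Tendsto (fun n => h (k n) x - c (k n)) atTop (nhds (φ x)) :=
    fun x hx => (hψ x hx).sub hcconv
  have hφbd : ∀ x : ℝ, 0 ≤ x → |φ x| ≤ C * Real.exp (-(γ / 2) * x) := by
    intro x hx
    exact le_of_tendsto (hφlim x hx).abs
      (Filter.Eventually.of_forall fun n => hdecay (k n) x hx)
  -- continuous representatives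
  set G : ℕ → ℝ → ℝ := fun j => (Set.Ioi (0:ℝ)).indicator (g j) with hG
  have hGint : ∀ j, Integrable (G j) :=
    fun j => (integrable_indicator_iff measurableSet_Ioi).2 (hgInt j)
  set HH : ℕ → ℝ → ℝ := fun j x => h j 0 + ∫ t in (0:ℝ)..x, G j t with hHH
  have hHcont : ∀ j, Continuous (HH j) := fun j =>
    continuous_const.add
      (intervalIntegral.continuous_primitive (fun a b => (hGint j).intervalIntegrable) 0)
  have hHeq : ∀ j x, 0 ≤ x → HH j x = h j x := by
    intro j x hx
    have hGg : (∫ t in (0:ℝ)..x, G j t) = ∫ t in (0:ℝ)..x, g j t := by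
      rw [intervalIntegral.integral_of_le hx, intervalIntegral.integral_of_le hx]
      exact setIntegral_congr_fun measurableSet_Ioc fun t ht =>
        Set.indicator_of_mem (show t ∈ Set.Ioi (0:ℝ) from ht.1) (g j)
    show h j 0 + (∫ t in (0:ℝ)..x, G j t) = h j x
    rw [hGg, hFTC j x hx]
  -- measurability of φ on (0, ∞)
  have hφmeas : AEMeasurable φ (volume.restrict (Set.Ioi 0)) := by
    refine aemeasurable_of_tendsto_metrizable_ae atTop
      (f := fun n x => HH (k n) x - c (k n))
      (fun n => ((hHcont (k n)).sub continuous_const).measurable.aemeasurable) ?_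
    rw [ae_restrict_iff' measurableSet_Ioi]
    refine Filter.Eventually.of_forall fun x hx => ?_
    refine (hφlim x (le_of_lt hx)).congr fun n => ?_
    show h (k n) x - c (k n) = HH (k n) x - c (k n)
    rw [hHeq (k n) x (le_of_lt hx)]
  have hexpBγ : IntegrableOn (fun x => Real.exp ((β - γ) * x)) (Set.Ioi 0) := by
    have := exp_neg_integrableOn_Ioi 0 (show (0:ℝ) < γ - β by linarith)
    refine this.congr_fun (fun x _ => by ring_nf) measurableSet_Ioi
  have hEsq : ∀ x : ℝ, Real.exp (-(γ / 2) * x) * Real.exp (-(γ / 2) * x) * Real.exp (β * x)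
      = Real.exp ((β - γ) * x) := by
    intro x
    rw [← Real.exp_add, ← Real.exp_add]
    ring_nf
  -- integrability of φ² e^{βx}
  have hφint : IntegrableOn (fun x => φ x ^ 2 * Real.exp (β * x)) (Set.Ioi 0) := by
    have hm : AEMeasurable (fun x => φ x ^ 2 * Real.exp (β * x)) (volume.restrict (Set.Ioi 0)) :=
      ((hφmeas.mul hφmeas).congr (by filter_upwards with x; simp [Pi.mul_apply, sq])).mul
        (Real.measurable_exp.comp (measurable_id.const_mul β)).aemeasurable
    refine Integrable.mono' (g := fun x => C ^ 2 * Real.exp ((β - γ) * x))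
      (hexpBγ.const_mul _) hm.aestronglyMeasurable ?_
    rw [ae_restrict_iff' measurableSet_Ioi]
    refine Filter.Eventually.of_forall fun x hx => ?_
    have h1 := hφbd x (le_of_lt hx)
    have h2 := hEsq x
    rw [Real.norm_eq_abs, abs_of_nonneg (by positivity)]
    calc φ x ^ 2 * Real.exp (β * x) = (|φ x| * |φ x|) * Real.exp (β * x) := by
          rw [← sq_abs]; ring
      _ ≤ ((C * Real.exp (-(γ / 2) * x)) * (C * Real.exp (-(γ / 2) * x)))
            * Real.exp (β * x) :=
          mul_le_mul_of_nonneg_right (mul_self_le_mul_self (abs_nonneg _) h1)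
            (Real.exp_pos _).le
      _ = C ^ 2 * (Real.exp (-(γ / 2) * x) * Real.exp (-(γ / 2) * x) * Real.exp (β * x)) := by
          ring
      _ = C ^ 2 * Real.exp ((β - γ) * x) := by rw [h2]
  -- the final convergence in L²_β
  have hfinal : Tendsto
      (fun n => ∫ x in Set.Ioi (0:ℝ), ((h (k n) x - c (k n)) - φ x) ^ 2 * Real.exp (β * x))
      atTop (nhds 0) := by
    have key : Tendsto
        (fun n => ∫ x in Set.Ioi (0:ℝ), ((h (k n) x - c (k n)) - φ x) ^ 2 * Real.exp (β * x))
        atTop (nhds (∫ _x in Set.Ioi (0:ℝ), (0:ℝ))) := by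
      refine MeasureTheory.tendsto_integral_of_dominated_convergence
        (bound := fun x => (2 * C) ^ 2 * Real.exp ((β - γ) * x)) ?_ (hexpBγ.const_mul _) ?_ ?_
      · intro n
        have hm : AEMeasurable (fun x => ((HH (k n) x - c (k n)) - φ x) ^ 2 * Real.exp (β * x))
            (volume.restrict (Set.Ioi 0)) := by
          have h1 : AEMeasurable (fun x => (HH (k n) x - c (k n)) - φ x)
              (volume.restrict (Set.Ioi 0)) :=
            (((hHcont (k n)).sub continuous_const).measurable.aemeasurable).sub hφmeas
          exact ((h1.mul h1).congr (by filter_upwards with x; simp [Pi.mul_apply, sq])).mul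
            (Real.measurable_exp.comp (measurable_id.const_mul β)).aemeasurable
        refine hm.aestronglyMeasurable.congr ?_
        rw [Filter.EventuallyEq, ae_restrict_iff' measurableSet_Ioi]
        refine Filter.Eventually.of_forall fun x hx => ?_
        rw [hHeq (k n) x (le_of_lt hx)]
      · intro n
        rw [ae_restrict_iff' measurableSet_Ioi]
        refine Filter.Eventually.of_forall fun x hx => ?_
        have h1 := hφbd x (le_of_lt hx)
        have h2 := hdecay (k n) x (le_of_lt hx)
        have h3 : |h (k n) x - c (k n) - φ x| ≤ 2 * C * Real.exp (-(γ / 2) * x) := by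
          calc |h (k n) x - c (k n) - φ x| ≤ |h (k n) x - c (k n)| + |φ x| := abs_sub _ _
            _ ≤ 2 * C * Real.exp (-(γ / 2) * x) := by linarith
        have h4 := hEsq x
        rw [Real.norm_eq_abs, abs_of_nonneg (by positivity)]
        set w : ℝ := h (k n) x - c (k n) - φ x with hw
        calc w ^ 2 * Real.exp (β * x) = (|w| * |w|) * Real.exp (β * x) := by
              rw [← sq_abs]; ring
          _ ≤ ((2 * C * Real.exp (-(γ / 2) * x)) * (2 * C * Real.exp (-(γ / 2) * x)))
                * Real.exp (β * x) :=
              mul_le_mul_of_nonneg_right (mul_self_le_mul_self (abs_nonneg _) h3)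
                (Real.exp_pos _).le
          _ = (2 * C) ^ 2
                * (Real.exp (-(γ / 2) * x) * Real.exp (-(γ / 2) * x) * Real.exp (β * x)) := by
              ring
          _ = (2 * C) ^ 2 * Real.exp ((β - γ) * x) := by rw [h4]
      · rw [ae_restrict_iff' measurableSet_Ioi]
        refine Filter.Eventually.of_forall fun x hx => ?_
        have h1 : Tendsto (fun n => h (k n) x - c (k n) - φ x) atTop (nhds 0) := by
          have := (hφlim x (le_of_lt hx)).sub_const (φ x)
          simpa using this
        have h2 := (h1.pow 2).mul_const (Real.exp (β * x))
        simpa using h2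
    simpa using key
  exact ⟨k, hk, L.1, φ, hφint, hcconv, hfinal⟩
end
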